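/- arXiv:1101.0983 — 10 statements merged into one kernel-verified Lean document; each statement's English description precedes it below -/
import Mathlib

section
/- For all nonnegative integers ℓ and m, the binomial identity C(ℓ,m)·C(ℓ+m,m) = ∑_{k=0}^{m} C(2m, m+k)·C(ℓ-m, k)·C(ℓ+m+k, k) holds. -/
open Finset

private lemma vand (a b k : ℕ) :
    (a + b).choose k = ∑ j ∈ range (k + 1), a.choose j * b.choose (k - j) := by
  rw [Nat.add_choose_eq, Finset.Nat.sum_antidiagonal_eq_sum_range_succ_mk]

private lemma choose_mul' (n k j : ℕ) (hjk : j ≤ k) :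
    n.choose k * k.choose j = n.choose j * (n - j).choose (k - j) := by
  by_cases hkn : k ≤ n
  · exact Nat.choose_mul hjk
  · push_neg at hkn
    rw [Nat.choose_eq_zero_of_lt hkn, Nat.zero_mul]
    by_cases hjn : j ≤ n
    · rw [Nat.choose_eq_zero_of_lt (show n - j < k - j by omega), Nat.mul_zero]
    · rw [Nat.choose_eq_zero_of_lt (by omega), Nat.zero_mul]

-- expand a binomial as a sum up to a larger bound
private lemma vand_ext (a k m : ℕ) (hk : k ≤ m) :
    (a + k).choose k = ∑ j ∈ range (m + 1), a.choose j * k.choose j := by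
  rw [vand]
  have h1 : ∑ j ∈ range (k + 1), a.choose j * k.choose (k - j) =
      ∑ j ∈ range (k + 1), a.choose j * k.choose j :=
    Finset.sum_congr rfl fun j hj => by
      rw [mem_range] at hj
      rw [Nat.choose_symm (show j ≤ k by omega)]
  rw [h1]
  refine Finset.sum_subset (Finset.range_subset_range.2 (show k + 1 ≤ m + 1 by omega)) ?_
  intro j _ hj
  rw [mem_range, not_lt] at hj
  rw [Nat.choose_eq_zero_of_lt (show k < j by omega), Nat.mul_zero]

theorem pfaff_saalschutz_special (ℓ m : ℕ) (h : m ≤ ℓ) :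
    ℓ.choose m * (ℓ + m).choose m =
      ∑ k ∈ range (m + 1),
        (2 * m).choose (m + k) * (ℓ - m).choose k * (ℓ + m + k).choose k := by
  obtain ⟨n, rfl⟩ : ∃ n, ℓ = n + m := ⟨ℓ - m, by omega⟩
  rw [Nat.add_sub_cancel]
  have step1 : ∀ k ∈ range (m + 1),
      (2 * m).choose (m + k) * n.choose k * (n + m + m + k).choose k =
      ∑ j ∈ range (m + 1),
        (n + m + m).choose j * ((2 * m).choose (m + k) * (n.choose k * k.choose j)) := by
    intro k hk
    rw [mem_range] at hk
    rw [vand_ext (n + m + m) k m (by omega), Finset.mul_sum]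
    exact Finset.sum_congr rfl fun j _ => by ring
  rw [Finset.sum_congr rfl step1, Finset.sum_comm]
  have step2 : ∀ j ∈ range (m + 1),
      (∑ k ∈ range (m + 1),
        (n + m + m).choose j * ((2 * m).choose (m + k) * (n.choose k * k.choose j))) =
      (n + m + m).choose j * (n.choose j * ((n - j) + 2 * m).choose (m - j)) := by
    intro j hj
    rw [mem_range] at hj
    rw [← Finset.mul_sum]
    congr 1
    have hsub : Ico j (m + 1) ⊆ range (m + 1) := by
      intro x hx; rw [mem_Ico] at hx; rw [mem_range]; omega
    rw [← Finset.sum_subset hsub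
        (fun k hk hk' => by
          rw [mem_range] at hk
          have hkj : k < j := by
            by_contra hno
            exact hk' (mem_Ico.mpr ⟨by omega, by omega⟩)
          rw [Nat.choose_eq_zero_of_lt hkj, Nat.mul_zero, Nat.mul_zero])]
    rw [Finset.sum_Ico_eq_sum_range]
    have hmj : m + 1 - j = (m - j) + 1 := by omega
    rw [hmj]
    have key : ∀ i ∈ range ((m - j) + 1),
        (2 * m).choose (m + (j + i)) * (n.choose (j + i) * (j + i).choose j) =
        n.choose j * ((n - j).choose i * (2 * m).choose ((m - j) - i)) := by
      intro i hi
      rw [mem_range] at hi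
      rw [choose_mul' n (j + i) j (by omega), Nat.add_sub_cancel_left]
      have hsym : (2 * m).choose (m + (j + i)) = (2 * m).choose ((m - j) - i) := by
        rw [← Nat.choose_symm (show m + (j + i) ≤ 2 * m by omega)]
        congr 1
        omega
      rw [hsym]; ring
    rw [Finset.sum_congr rfl key, ← Finset.mul_sum, ← vand (n - j) (2 * m) (m - j)]
  rw [Finset.sum_congr rfl step2]
  have step3 : ∀ j ∈ range (m + 1),
      (n + m + m).choose j * (n.choose j * ((n - j) + 2 * m).choose (m - j)) =
      (n + m + m).choose m * (n.choose j * m.choose j) := by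
    intro j hj
    rw [mem_range] at hj
    by_cases hjn : j ≤ n
    · have h1 : (n - j) + 2 * m = (n + m + m) - j := by omega
      have h2 := Nat.choose_mul (n := n + m + m) (k := m) (show j ≤ m by omega)
      rw [h1]
      calc (n + m + m).choose j * (n.choose j * ((n + m + m) - j).choose (m - j))
          = n.choose j * ((n + m + m).choose j * ((n + m + m) - j).choose (m - j)) := by
            ring
        _ = n.choose j * ((n + m + m).choose m * m.choose j) := by rw [← h2]
        _ = (n + m + m).choose m * (n.choose j * m.choose j) := by ring
    · simp [Nat.choose_eq_zero_of_lt (show n < j by omega)]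
  rw [Finset.sum_congr rfl step3, ← Finset.mul_sum,
    ← vand_ext n m m le_rfl, Nat.mul_comm]
end

section
/- For all nonnegative integers k and positive integers n with k ≤ n-1 (and indeed for all k), ∑_{ℓ=k}^{n-1} (-1)^ℓ (2ℓ+1) C(ℓ,k) C(ℓ+k,k) = (-1)^{n-1} · n · C(n-1,k) · C(n+k,k). -/
open Finset

theorem alternating_sum_identity (n : ℕ) (hn : 0 < n) (k : ℕ) :
    ∑ ℓ ∈ Icc k (n - 1),
        (-1 : ℤ) ^ ℓ * (2 * ℓ + 1) * (ℓ.choose k : ℤ) * ((ℓ + k).choose k : ℤ) =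
      (-1 : ℤ) ^ (n - 1) * n * ((n - 1).choose k : ℤ) * ((n + k).choose k : ℤ) := by
  induction n, hn using Nat.le_induction with
  | base =>
    rcases k with _ | k
    · simp
    · rw [Finset.Icc_eq_empty (by omega)]
      simp [Nat.choose_eq_zero_of_lt (by omega : 0 < k + 1)]
  | succ n hn ih =>
    obtain ⟨m, rfl⟩ : ∃ m, n = m + 1 := ⟨n - 1, by omega⟩
    simp only [Nat.add_sub_cancel] at *
    by_cases hk : k ≤ m + 1
    · rw [Finset.sum_Icc_succ_top (by omega : k ≤ m + 1), ih]
      have hA : ((m : ℤ) + 1) * (Nat.choose m k : ℤ)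
          = (Nat.choose (m + 1) k : ℤ) * (((m : ℤ) + 1) - k) := by
        have h1 := Nat.add_one_mul_choose_eq m k
        have h2 := Nat.choose_succ_right_eq (m + 1) k
        have h3 : (m + 1) * Nat.choose m k = Nat.choose (m + 1) k * (m + 1 - k) := by
          simpa using h1.trans h2
        have := congrArg (fun x : ℕ => (x : ℤ)) h3
        push_cast [Nat.cast_sub (by omega : k ≤ m + 1)] at this
        linarith [this]
      have hB : ((m : ℤ) + 2) * (Nat.choose (m + 1 + 1 + k) k : ℤ)
          = ((m : ℤ) + k + 2) * (Nat.choose (m + 1 + k) k : ℤ) := by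
        have hs1 : Nat.choose (m + 1 + k) k = Nat.choose (m + 1 + k) (m + 1) := by
          have := Nat.choose_symm (by omega : m + 1 ≤ m + 1 + k)
          simpa [show m + 1 + k - (m + 1) = k from by omega] using this
        have hs2 : Nat.choose (m + 2 + k) k = Nat.choose (m + 2 + k) (m + 2) := by
          have := Nat.choose_symm (by omega : m + 2 ≤ m + 2 + k)
          simpa [show m + 2 + k - (m + 2) = k from by omega] using this
        have h1 := Nat.add_one_mul_choose_eq (m + 1 + k) (m + 1)
        have h2 : (m + k + 2) * Nat.choose (m + 1 + k) (m + 1)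
            = Nat.choose (m + 2 + k) (m + 2) * (m + 2) := by
          rw [show m + k + 2 = Nat.succ (m + 1 + k) from by omega,
            show m + 2 + k = m + 1 + k + 1 from by omega,
            show m + 2 = Nat.succ (m + 1) from by omega]
          exact h1
        have e1 : m + 1 + 1 + k = m + 2 + k := by omega
        rw [e1, hs1, hs2]
        have := congrArg (fun x : ℕ => (x : ℤ)) h2
        push_cast at this
        linarith [this]
      push_cast at hA hB ⊢
      linear_combination (-1 : ℤ) ^ m * (Nat.choose (m + 1 + k) k : ℤ) * hA
        + (-1 : ℤ) ^ m * (Nat.choose (m + 1) k : ℤ) * hB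
    · rw [Finset.Icc_eq_empty (by omega)]
      simp [Nat.choose_eq_zero_of_lt (by omega : m + 1 < k)]
end

section
/- For every positive integer n and every integer x, (1/n) ∑_{k=0}^{n-1} (-1)^k (2k+1) A_k(x) = (-1)^{n-1} ∑_{m=0}^{n-1} C(2m,m) x^m ∑_{k=0}^{m} C(m,k) C(m+k,k) C(n-1, m+k) C(n+m+k, m+k). -/
open Finset


lemma l1 (n k : ℕ) : ((n.choose (k+1) : ℤ)) * (k+1) = (n.choose k : ℤ) * ((n:ℤ) - k) := by
  rcases le_or_gt k n with h | h
  · have hc : ((n.choose (k+1) * (k+1) : ℕ) : ℤ) = ((n.choose k * (n - k) : ℕ) : ℤ) :=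
      congrArg Nat.cast (Nat.choose_succ_right_eq n k)
    push_cast [Nat.cast_sub h] at hc
    linarith [hc]
  · simp [Nat.choose_eq_zero_of_lt h, Nat.choose_eq_zero_of_lt (lt_trans h (Nat.lt_succ_self k))]

lemma l2 (n k : ℕ) : ((n:ℤ)+1) * (n.choose k : ℤ) = ((k:ℤ)+1) * ((n+1).choose (k+1) : ℤ) := by
  have hc : ((Nat.succ n * n.choose k : ℕ) : ℤ) = (((n+1).choose (k+1) * (k+1) : ℕ) : ℤ) :=
    congrArg Nat.cast (Nat.add_one_mul_choose_eq n k)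
  push_cast at hc
  linarith [hc]

lemma l3 (n j : ℕ) : ((n:ℤ)+1) * (n.choose j : ℤ) = ((n:ℤ)+1-j) * ((n+1).choose j : ℤ) := by
  have h2 := l2 n j
  have h1 := l1 (n+1) j
  push_cast at h1
  linarith [h1, h2]

lemma wz (n m k : ℕ) :
    ((n:ℤ)+1) * ((n:ℤ)+1-m)^2 *
      ((m.choose k : ℤ) * ((m+k).choose k : ℤ) * ((n+1).choose (m+k) : ℤ) * ((n+1+m+k).choose (m+k) : ℤ))
    - ((n:ℤ)+1) * ((n:ℤ)+m+1)^2 *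
      ((m.choose k : ℤ) * ((m+k).choose k : ℤ) * (n.choose (m+k) : ℤ) * ((n+m+k).choose (m+k) : ℤ))
    = -2 * (
      ((k:ℤ)+1)^2 * ((k:ℤ)+1+m) *
        ((m.choose (k+1) : ℤ) * ((m+(k+1)).choose (k+1) : ℤ) * ((n+1).choose (m+(k+1)) : ℤ) *
          ((n+m+(k+1)).choose (m+(k+1)) : ℤ))
      - (k:ℤ)^2 * ((k:ℤ)+m) *
        ((m.choose k : ℤ) * ((m+k).choose k : ℤ) * ((n+1).choose (m+k) : ℤ) * ((n+m+k).choose (m+k) : ℤ)) ) := by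
  have e1 : n+1+m+k = n+m+k+1 := by omega
  have e2 : m+(k+1) = m+k+1 := by omega
  have e3 : n+m+(k+1) = n+m+k+1 := by omega
  rw [e1, e2, e3]
  have ha := l3 (n+m+k) (m+k)
  have hb := l3 n (m+k)
  have hc := l1 m k
  have hd := l2 (m+k) k
  have he := l1 (n+1) (m+k)
  have hf := l2 (n+m+k) (m+k)
  push_cast at ha hb hc hd he hf
  have hd' : ((m+k+1).choose (k+1) : ℤ) * ((k:ℤ)+1) = ((m+k).choose k : ℤ) * ((m:ℤ)+k+1) := by
    linarith [hd]
  have hf' : ((n+m+k+1).choose (m+k+1) : ℤ) * ((m:ℤ)+k+1) = ((n+m+k).choose (m+k) : ℤ) * ((n:ℤ)+m+k+1) := by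
    linarith [hf]
  have hprod := congrArg₂ (· * ·) (congrArg₂ (· * ·) hc hd') (congrArg₂ (· * ·) he hf')
  refine mul_left_cancel₀ (a := (((n:ℤ)+1) * ((m:ℤ)+k+1)^2)) (by positivity) ?_
  linear_combination
    (-((n:ℤ)+1)*((m:ℤ)+(k:ℤ)+1)^2*((n:ℤ)+1-(m:ℤ))^2*(m.choose k : ℤ)*((m+k).choose k : ℤ)*((n+1).choose (m+k) : ℤ)) * ha
    - (((n:ℤ)+1)*((m:ℤ)+(k:ℤ)+1)^2*((n:ℤ)+(m:ℤ)+1)^2*(m.choose k : ℤ)*((m+k).choose k : ℤ)*((n+m+k).choose (m+k) : ℤ)) * hb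
    + (2*((n:ℤ)+1)*((k:ℤ)+1+(m:ℤ))) * hprod

lemma vanishU (n m : ℕ) (h : n < m) :
    ∑ k ∈ range (m+1), (m.choose k : ℤ) * ((m+k).choose k : ℤ) * (n.choose (m+k) : ℤ) *
      ((n+m+k).choose (m+k) : ℤ) = 0 := by
  apply Finset.sum_eq_zero
  intro k _
  have : n.choose (m+k) = 0 := Nat.choose_eq_zero_of_lt (lt_of_lt_of_le h (Nat.le_add_right m k))
  simp [this]

lemma habs (n m : ℕ) :
    ((n:ℤ)+1-m) * ((n+1).choose m : ℤ) * ((n+m+1).choose m : ℤ)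
      = ((n:ℤ)+m+1) * (n.choose m : ℤ) * ((n+m).choose m : ℤ) := by
  have h1 := l3 n m
  have h2 := l3 (n+m) m
  push_cast at h2
  refine mul_left_cancel₀ (a := ((n:ℤ)+1)) (by positivity) ?_
  linear_combination (-(((n:ℤ)+1)) * ((n+m+1).choose m : ℤ)) * h1 + (-(((n:ℤ)+1)) * (n.choose m : ℤ)) * h2

lemma claimA (n m : ℕ) :
    ((2*m).choose m : ℤ) *
      ∑ k ∈ range (m+1), (m.choose k : ℤ) * ((m+k).choose k : ℤ) * (n.choose (m+k) : ℤ) *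
        ((n+m+k).choose (m+k) : ℤ)
      = (n.choose m : ℤ)^2 * ((n+m).choose m : ℤ)^2 := by
  induction n with
  | zero =>
    rcases Nat.eq_zero_or_pos m with hm | hm
    · subst hm; norm_num
    · rw [vanishU 0 m hm]
      simp [Nat.choose_eq_zero_of_lt hm]
  | succ n ih =>
    rcases lt_trichotomy (n+1) m with h | h | h
    · rw [vanishU (n+1) m h]
      simp [Nat.choose_eq_zero_of_lt h]
    · -- m = n+1 : single term k = 0
      subst h
      rw [Finset.sum_eq_single 0]
      · have e : 2*(n+1) = n+1+(n+1) := by omega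
        rw [e]
        norm_num
        ring
      · intro k _ hk
        have hk0 : 0 < k := Nat.pos_of_ne_zero hk
        have : (n+1).choose (n+1+k) = 0 := Nat.choose_eq_zero_of_lt (by omega)
        simp [this]
      · intro h'; simp at h'
    · -- m ≤ n
      have hm : m ≤ n := Nat.lt_succ_iff.mp h
      set G : ℕ → ℤ := fun k =>
        (k:ℤ)^2 * ((k:ℤ)+m) *
          ((m.choose k : ℤ) * ((m+k).choose k : ℤ) * ((n+1).choose (m+k) : ℤ) *
            ((n+m+k).choose (m+k) : ℤ)) with hGdef
      have tele : ∑ k ∈ range (m+1), (G (k+1) - G k) = G (m+1) - G 0 :=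
        Finset.sum_range_sub G (m+1)
      have hG1 : G (m+1) = 0 := by
        simp [hGdef, Nat.choose_eq_zero_of_lt (Nat.lt_succ_self m)]
      have hG0 : G 0 = 0 := by simp [hGdef]
      have hwz : ∀ k ∈ range (m+1),
          ((n:ℤ)+1) * ((n:ℤ)+1-m)^2 *
            ((m.choose k : ℤ) * ((m+k).choose k : ℤ) * ((n+1).choose (m+k) : ℤ) *
              ((n+1+m+k).choose (m+k) : ℤ))
          - ((n:ℤ)+1) * ((n:ℤ)+m+1)^2 *
            ((m.choose k : ℤ) * ((m+k).choose k : ℤ) * (n.choose (m+k) : ℤ) *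
              ((n+m+k).choose (m+k) : ℤ))
          = -2 * (G (k+1) - G k) := by
        intro k _
        have := wz n m k
        rw [this]
        simp only [hGdef]
        push_cast
        ring
      have hsum := Finset.sum_congr rfl hwz
      rw [Finset.sum_sub_distrib, ← Finset.mul_sum, ← Finset.mul_sum, ← Finset.mul_sum,
        tele, hG1, hG0] at hsum
      -- hsum : (n+1)(n+1-m)^2 * U(n+1) - (n+1)(n+m+1)^2 * U(n) = -2*(0-0)
      have hrec : ((n:ℤ)+1) * ((n:ℤ)+1-m)^2 *
          (∑ k ∈ range (m+1), (m.choose k : ℤ) * ((m+k).choose k : ℤ) * ((n+1).choose (m+k) : ℤ) *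
            ((n+1+m+k).choose (m+k) : ℤ))
          = ((n:ℤ)+1) * ((n:ℤ)+m+1)^2 *
          (∑ k ∈ range (m+1), (m.choose k : ℤ) * ((m+k).choose k : ℤ) * (n.choose (m+k) : ℤ) *
            ((n+m+k).choose (m+k) : ℤ)) := by linarith [hsum]
      have habs2 := habs n m
      have hne : (((n:ℤ)+1) * ((n:ℤ)+1-m)^2) ≠ 0 := by
        have : (0:ℤ) < (n:ℤ)+1-m := by
          have : (m:ℤ) ≤ n := by exact_mod_cast hm
          linarith
        positivity
      rw [show n+m+1 = n+1+m from by omega] at habs2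
      refine mul_left_cancel₀ hne ?_
      calc (((n:ℤ)+1) * ((n:ℤ)+1-m)^2) * (((2*m).choose m : ℤ) *
            ∑ k ∈ range (m+1), (m.choose k : ℤ) * ((m+k).choose k : ℤ) * ((n+1).choose (m+k) : ℤ) *
              ((n+1+m+k).choose (m+k) : ℤ))
          = ((2*m).choose m : ℤ) * (((n:ℤ)+1) * ((n:ℤ)+1-m)^2 *
            ∑ k ∈ range (m+1), (m.choose k : ℤ) * ((m+k).choose k : ℤ) * ((n+1).choose (m+k) : ℤ) *
              ((n+1+m+k).choose (m+k) : ℤ)) := by ring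
        _ = ((2*m).choose m : ℤ) * (((n:ℤ)+1) * ((n:ℤ)+m+1)^2 *
            ∑ k ∈ range (m+1), (m.choose k : ℤ) * ((m+k).choose k : ℤ) * (n.choose (m+k) : ℤ) *
              ((n+m+k).choose (m+k) : ℤ)) := by rw [hrec]
        _ = ((n:ℤ)+1) * ((n:ℤ)+m+1)^2 * (((2*m).choose m : ℤ) *
            ∑ k ∈ range (m+1), (m.choose k : ℤ) * ((m+k).choose k : ℤ) * (n.choose (m+k) : ℤ) *
              ((n+m+k).choose (m+k) : ℤ)) := by ring
        _ = ((n:ℤ)+1) * ((n:ℤ)+m+1)^2 * ((n.choose m : ℤ)^2 * ((n+m).choose m : ℤ)^2) := by rw [ih]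
        _ = (((n:ℤ)+1) * ((n:ℤ)+1-m)^2) * (((n+1).choose m : ℤ)^2 * ((n+1+m).choose m : ℤ)^2) := by
            linear_combination (-((n:ℤ)+1) * (((n:ℤ)+1-m) * ((n+1).choose m : ℤ) * ((n+1+m).choose m : ℤ)
              + ((n:ℤ)+m+1) * (n.choose m : ℤ) * ((n+m).choose m : ℤ))) * habs2

lemma star_aux (p m : ℕ) :
    (2*(p:ℤ)+3) * (((p+1).choose m : ℤ))^2 * (((p+1+m).choose m : ℤ))^2
      = ((p:ℤ)+2) * ((2*m).choose m : ℤ) *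
          (∑ k ∈ range (m+1), (m.choose k : ℤ) * ((m+k).choose k : ℤ) * ((p+1).choose (m+k) : ℤ) *
            ((p+1+1+m+k).choose (m+k) : ℤ))
        + ((p:ℤ)+1) * ((2*m).choose m : ℤ) *
          (∑ k ∈ range (m+1), (m.choose k : ℤ) * ((m+k).choose k : ℤ) * (p.choose (m+k) : ℤ) *
            ((p+1+m+k).choose (m+k) : ℤ)) := by
  have hclaim := claimA (p+1) m
  have hcomb : ((p:ℤ)+2) *
          (∑ k ∈ range (m+1), (m.choose k : ℤ) * ((m+k).choose k : ℤ) * ((p+1).choose (m+k) : ℤ) *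
            ((p+1+1+m+k).choose (m+k) : ℤ))
        + ((p:ℤ)+1) *
          (∑ k ∈ range (m+1), (m.choose k : ℤ) * ((m+k).choose k : ℤ) * (p.choose (m+k) : ℤ) *
            ((p+1+m+k).choose (m+k) : ℤ))
      = (2*(p:ℤ)+3) *
          (∑ k ∈ range (m+1), (m.choose k : ℤ) * ((m+k).choose k : ℤ) * ((p+1).choose (m+k) : ℤ) *
            ((p+1+m+k).choose (m+k) : ℤ)) := by
    rw [Finset.mul_sum, Finset.mul_sum, Finset.mul_sum, ← Finset.sum_add_distrib]
    refine Finset.sum_congr rfl (fun k _ => ?_)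
    have hA := l3 (p+1+m+k) (m+k)
    rw [show p+1+m+k+1 = p+1+1+m+k from by omega] at hA
    have hB := l3 p (m+k)
    push_cast at hA hB
    linear_combination (-((m.choose k : ℤ) * ((m+k).choose k : ℤ) * ((p+1).choose (m+k) : ℤ))) * hA
      + ((m.choose k : ℤ) * ((m+k).choose k : ℤ) * ((p+1+m+k).choose (m+k) : ℤ)) * hB
  linear_combination (-(2*(p:ℤ)+3)) * hclaim - (((2*m).choose m : ℤ)) * hcomb

theorem apery_alternating_sum_formula (n : ℕ) (hn : 0 < n) (x : ℤ) :
    ∑ k ∈ range n, (-1 : ℤ) ^ k * (2 * k + 1) *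
        (∑ j ∈ range (k + 1),
          (k.choose j : ℤ) ^ 2 * ((k + j).choose j : ℤ) ^ 2 * x ^ j) =
      (-1 : ℤ) ^ (n - 1) * n *
        ∑ m ∈ range n, ((2 * m).choose m : ℤ) * x ^ m *
          ∑ k ∈ range (m + 1),
            (m.choose k : ℤ) * ((m + k).choose k : ℤ) * ((n - 1).choose (m + k) : ℤ) *
              ((n + m + k).choose (m + k) : ℤ) := by
  induction n, hn using Nat.le_induction with
  | base => norm_num
  | succ n hn ih =>
    obtain ⟨p, rfl⟩ : ∃ p, n = p+1 := ⟨n-1, by omega⟩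
    simp only [Nat.add_sub_cancel] at ih ⊢
    rw [Finset.sum_range_succ, ih]
    have hext : ∑ m ∈ range (p+1+1), ((2*m).choose m : ℤ) * x ^ m *
          ∑ k ∈ range (m+1), (m.choose k : ℤ) * ((m+k).choose k : ℤ) * (p.choose (m+k) : ℤ) *
            ((p+1+m+k).choose (m+k) : ℤ)
        = ∑ m ∈ range (p+1), ((2*m).choose m : ℤ) * x ^ m *
          ∑ k ∈ range (m+1), (m.choose k : ℤ) * ((m+k).choose k : ℤ) * (p.choose (m+k) : ℤ) *
            ((p+1+m+k).choose (m+k) : ℤ) := by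
      rw [Finset.sum_range_succ]
      have hz : ∑ k ∈ range (p+1+1), ((p+1).choose k : ℤ) * ((p+1+k).choose k : ℤ) *
          (p.choose (p+1+k) : ℤ) * ((p+1+(p+1)+k).choose (p+1+k) : ℤ) = 0 := by
        apply Finset.sum_eq_zero
        intro k _
        have : p.choose (p+1+k) = 0 := Nat.choose_eq_zero_of_lt (by omega)
        simp [this]
      rw [hz]
      ring
    have hmain : (2*(p:ℤ)+3) *
          (∑ j ∈ range (p+1+1), ((p+1).choose j : ℤ)^2 * ((p+1+j).choose j : ℤ)^2 * x^j)
        = ((p:ℤ)+2) *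
            (∑ m ∈ range (p+1+1), ((2*m).choose m : ℤ) * x ^ m *
              ∑ k ∈ range (m+1), (m.choose k : ℤ) * ((m+k).choose k : ℤ) * ((p+1).choose (m+k) : ℤ) *
                ((p+1+1+m+k).choose (m+k) : ℤ))
          + ((p:ℤ)+1) *
            (∑ m ∈ range (p+1+1), ((2*m).choose m : ℤ) * x ^ m *
              ∑ k ∈ range (m+1), (m.choose k : ℤ) * ((m+k).choose k : ℤ) * (p.choose (m+k) : ℤ) *
                ((p+1+m+k).choose (m+k) : ℤ)) := by
      rw [Finset.mul_sum, Finset.mul_sum, Finset.mul_sum, ← Finset.sum_add_distrib]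
      refine Finset.sum_congr rfl (fun m _ => ?_)
      linear_combination (x^m) * star_aux p m
    rw [← hext]
    push_cast
    linear_combination ((-1:ℤ)^p * (-1)) * hmain
end

section
/- Let p be an odd prime and suppose 0 ≤ m + k ≤ p - 1 with m, k nonnegative integers. Then C(p-1, m+k) · C(p+m+k, m+k) ≡ (-1)^{m+k} (mod p^2). -/
theorem binom_product_mod_p_squared (p : ℕ) (hp : p.Prime) (hodd : Odd p)
    (m k : ℕ) (h : m + k ≤ p - 1) :
    ((p - 1).choose (m + k) : ℤ) * ((p + m + k).choose (m + k) : ℤ) ≡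
      (-1 : ℤ) ^ (m + k) [ZMOD (p : ℤ) ^ 2] := by
  set n := m + k with hn
  have hp1 : 1 ≤ p := hp.one_lt.le
  have hnlt : n < p := lt_of_le_of_lt h (Nat.sub_lt hp.pos one_pos)
  have hpmk : p + m + k = p + n := by omega
  rw [hpmk]
  set F : ℤ := (n.factorial : ℤ) with hF
  -- Fact 1
  have f1 : ((p - 1).choose n : ℤ) * F = ∏ i ∈ Finset.range n, ((p : ℤ) - 1 - i) := by
    have h1 : (p - 1).descFactorial n = n.factorial * (p - 1).choose n :=
      Nat.descFactorial_eq_factorial_mul_choose _ _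
    have h2 : (p - 1).descFactorial n = ∏ i ∈ Finset.range n, (p - 1 - i) :=
      Nat.descFactorial_eq_prod_range _ _
    have h3 : ((p - 1).descFactorial n : ℤ) = ∏ i ∈ Finset.range n, ((p : ℤ) - 1 - i) := by
      rw [h2, Nat.cast_prod]
      apply Finset.prod_congr rfl
      intro i hi
      simp only [Finset.mem_range] at hi
      rw [Nat.cast_sub (by omega : i ≤ p - 1), Nat.cast_sub hp1]
      push_cast; ring
    rw [← h3, h1]; push_cast; ring
  -- Fact 2
  have f2 : ((p + n).choose n : ℤ) * F = ∏ i ∈ Finset.range n, ((p : ℤ) + 1 + i) := by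
    have h1 : (p + n).descFactorial n = n.factorial * (p + n).choose n :=
      Nat.descFactorial_eq_factorial_mul_choose _ _
    have h2 : (p + n).descFactorial n = ∏ i ∈ Finset.range n, (p + n - i) :=
      Nat.descFactorial_eq_prod_range _ _
    have h3 : ((p + n).descFactorial n : ℤ) = ∏ i ∈ Finset.range n, ((p : ℤ) + n - i) := by
      rw [h2, Nat.cast_prod]
      apply Finset.prod_congr rfl
      intro i hi
      simp only [Finset.mem_range] at hi
      rw [Nat.cast_sub (by omega : i ≤ p + n)]
      push_cast; ring
    have h4 : (∏ i ∈ Finset.range n, ((p : ℤ) + n - i)) =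
        ∏ i ∈ Finset.range n, ((p : ℤ) + 1 + i) := by
      rw [← Finset.prod_range_reflect]
      apply Finset.prod_congr rfl
      intro i hi
      simp only [Finset.mem_range] at hi
      have hcast : ((n - 1 - i : ℕ) : ℤ) = (n : ℤ) - 1 - i := by
        rw [Nat.cast_sub (by omega), Nat.cast_sub (by omega)]; push_cast; ring
      rw [hcast]; ring
    rw [← h4, ← h3, h1]; push_cast; ring
  -- key congruence with the factor F^2
  have key : ((p - 1).choose n : ℤ) * ((p + n).choose n : ℤ) * F ^ 2 ≡
      (-1 : ℤ) ^ n * F ^ 2 [ZMOD (p : ℤ) ^ 2] := by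
    have heq : ((p - 1).choose n : ℤ) * ((p + n).choose n : ℤ) * F ^ 2 =
        ∏ i ∈ Finset.range n, (((p : ℤ)) ^ 2 - (1 + i) ^ 2) := by
      have e : ((p - 1).choose n : ℤ) * ((p + n).choose n : ℤ) * F ^ 2 =
          (((p - 1).choose n : ℤ) * F) * (((p + n).choose n : ℤ) * F) := by ring
      rw [e, f1, f2, ← Finset.prod_mul_distrib]
      exact Finset.prod_congr rfl fun i _ => by ring
    have hFeq : (-1 : ℤ) ^ n * F ^ 2 = ∏ i ∈ Finset.range n, (-(1 + (i : ℤ)) ^ 2) := by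
      have hprodF : (∏ i ∈ Finset.range n, (1 + (i : ℤ))) = F := by
        rw [hF, ← Finset.prod_range_add_one_eq_factorial n, Nat.cast_prod]
        exact Finset.prod_congr rfl fun i _ => by push_cast; ring
      have : (∏ i ∈ Finset.range n, (-(1 + (i : ℤ)) ^ 2)) =
          (-1 : ℤ) ^ n * (∏ i ∈ Finset.range n, (1 + (i : ℤ))) ^ 2 := by
        have e2 : (∏ i ∈ Finset.range n, (-(1 + (i : ℤ)) ^ 2)) =
            ∏ i ∈ Finset.range n, ((-1 : ℤ) * (1 + (i : ℤ)) ^ 2) :=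
          Finset.prod_congr rfl fun i _ => by ring
        rw [e2, Finset.prod_mul_distrib, Finset.prod_const, Finset.card_range,
          Finset.prod_pow]
      rw [this, hprodF]
    rw [heq, hFeq]
    have hmod : ((p : ℤ) ^ 2) = ((p ^ 2 : ℕ) : ℤ) := by push_cast; ring
    rw [hmod, ← ZMod.intCast_eq_intCast_iff]
    push_cast
    apply Finset.prod_congr rfl
    intro i _
    have hz : ((p : ZMod (p ^ 2)) ^ 2) = 0 := by
      have : ((p : ZMod (p ^ 2)) ^ 2) = ((p ^ 2 : ℕ) : ZMod (p ^ 2)) := by push_cast; ring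
      rw [this, ZMod.natCast_self]
    rw [hz]; ring
  -- cancel F^2
  have hgcd : Int.gcd ((p : ℤ) ^ 2) (F ^ 2) = 1 := by
    have hpn : ¬ (p ∣ n.factorial) := by
      intro hdvd
      have := (Nat.Prime.dvd_factorial hp).mp hdvd
      omega
    have hcop : Nat.Coprime p n.factorial := (Nat.Prime.coprime_iff_not_dvd hp).mpr hpn
    have : Nat.Coprime (p ^ 2) (n.factorial ^ 2) := hcop.pow 2 2
    have hcast : Int.gcd ((p : ℤ) ^ 2) (F ^ 2) = Nat.gcd (p ^ 2) (n.factorial ^ 2) := by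
      rw [hF]
      rw [show ((p : ℤ) ^ 2) = ((p ^ 2 : ℕ) : ℤ) by push_cast; ring,
          show ((n.factorial : ℤ) ^ 2) = ((n.factorial ^ 2 : ℕ) : ℤ) by push_cast; ring]
      exact Int.gcd_natCast_natCast _ _
    rw [hcast]; exact this
  have hm : (0 : ℤ) < (p : ℤ) ^ 2 := by positivity
  have := Int.ModEq.cancel_right_div_gcd hm key
  rwa [hgcd, Nat.cast_one, Int.ediv_one] at this
end

section
/- Let p be an odd prime and let m, k be nonnegative integers with 0 ≤ k < p - 1, k ≤ m ≤ p - 1, and m + k ≥ p. Then p^2 divides C(2m, m) · C(m+k, k). -/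
theorem p_squared_divides_binom_product (p : ℕ) (hp : p.Prime) (hodd : Odd p)
    (m k : ℕ) (hk : k < p - 1) (hkm : k ≤ m) (hm : m ≤ p - 1) (hmk : p ≤ m + k) :
    p ^ 2 ∣ (2 * m).choose m * (m + k).choose k := by
  have hp1 : 0 < p := hp.pos
  have hmp : m < p := lt_of_le_of_lt hm (Nat.sub_lt hp1 one_pos)
  have hkp : k < p := lt_of_le_of_lt (le_of_lt hk) (Nat.sub_lt hp1 one_pos)
  have h1 : p ∣ (2 * m).choose m := by
    have := hp.dvd_choose_add hmp hmp (le_trans hmk (by omega))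
    simpa [two_mul] using this
  have h2 : p ∣ (m + k).choose k := by
    have := hp.dvd_choose_add hkp hmp (by omega)
    simpa [add_comm] using this
  rw [pow_two]
  exact mul_dvd_mul h1 h2
end

section
/- For every prime p > 3, ∑_{k=0}^{p-1} C(2k,k) (-2)^k ≡ 1 - (4/3)(2^{p-1} - 1) (mod p^2). -/
open Finset



private lemma two_mul_factorial (k : ℕ) :
    (2*k).factorial = 2^k * k.factorial * ∏ j ∈ range k, (2*j+1) := by
  induction k with
  | zero => simp
  | succ n ih =>
      have h : (2*(n+1)).factorial = (2*n+2) * ((2*n+1) * (2*n).factorial) := by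
        rw [show 2*(n+1) = (2*n+1)+1 by ring, Nat.factorial_succ]
        rw [show 2*n+1 = (2*n)+1 from rfl, Nat.factorial_succ]
      rw [h, ih, prod_range_succ, Nat.factorial_succ]
      ring

private lemma cb_mul (k : ℕ) :
    (2*k).choose k * k.factorial = 2^k * ∏ j ∈ range k, (2*j+1) := by
  have h := Nat.choose_mul_factorial_mul_factorial (show k ≤ 2*k by omega)
  rw [show 2*k - k = k by omega] at h
  have h2 := two_mul_factorial k
  apply Nat.eq_of_mul_eq_mul_right (Nat.factorial_pos k)
  calc (2*k).choose k * k.factorial * k.factorial = (2*k).factorial := h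
    _ = 2^k * (∏ j ∈ range k, (2*j+1)) * k.factorial := by rw [h2]; ring

-- (n*p - 1).choose r ≡ (-1)^r  mod p
private lemma choose_mul_sub_one (p n : ℕ) (hp : p.Prime) (hn : 0 < n) :
    ∀ r, r < p → (((n*p - 1).choose r : ZMod p)) = (-1)^r := by
  have hp1 : 1 ≤ p := hp.one_lt.le
  have hnp : p ≤ n*p := Nat.le_mul_of_pos_left p hn
  haveI : Fact p.Prime := ⟨hp⟩
  intro r
  induction r with
  | zero => simp
  | succ s ih =>
    intro hs
    have ihs := ih (by omega)
    have key := Nat.choose_succ_right_eq (n*p-1) s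
    have hcast : ((n*p - 1 - s : ℕ) : ZMod p) = -1 - (s:ZMod p) := by
      have h1 : n*p - 1 - s = n*p - (1+s) := by omega
      have h2 : 1 + s ≤ n*p := by omega
      rw [h1, Nat.cast_sub h2]
      have hnp0 : (n:ZMod p) * (p:ZMod p) = 0 := by
        rw [ZMod.natCast_self]; ring
      push_cast
      rw [hnp0]; ring
    have keyF : ((n*p-1).choose (s+1) : ZMod p) * ((s+1 : ℕ) : ZMod p)
        = ((n*p-1).choose s : ZMod p) * ((n*p-1-s : ℕ) : ZMod p) := by
      exact_mod_cast congrArg (Nat.cast : ℕ → ZMod p) key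
    rw [ihs, hcast] at keyF
    have hne : ((s+1 : ℕ) : ZMod p) ≠ 0 := by
      rw [Ne, ZMod.natCast_eq_zero_iff]
      exact Nat.not_dvd_of_pos_of_lt (by omega) hs
    have : ((-1:ZMod p))^(s+1) * ((s+1:ℕ) : ZMod p) = (-1)^s * (-1 - (s:ZMod p)) := by
      push_cast
      ring
    rw [← this] at keyF
    exact mul_right_cancel₀ hne keyF

-- L6 : ∑ C(n,i)(-1)^i/(i+1) = 1/(n+1)  in ZMod p
private lemma alt_inv_sum (p n : ℕ) (hp : p.Prime) (hn : n + 1 < p) :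
    ∑ i ∈ range (n+1), (n.choose i : ZMod p) * (-1)^i * ((i+1:ℕ) : ZMod p)⁻¹
      = ((n+1:ℕ) : ZMod p)⁻¹ := by
  haveI : Fact p.Prime := ⟨hp⟩
  have hne : ((n+1:ℕ) : ZMod p) ≠ 0 := by
    rw [Ne, ZMod.natCast_eq_zero_iff]
    exact Nat.not_dvd_of_pos_of_lt (by omega) hn
  -- alternating sum identity in ZMod p
  have halt : ∑ i ∈ range (n+1), ((-1:ZMod p))^i * ((n+1).choose (i+1) : ZMod p) = 1 := by
    have h0 : (∑ i ∈ range (n + 2), (-1:ℤ) ^ i * ((n+1).choose i : ℤ)) = 0 := by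
      rw [Int.alternating_sum_range_choose]
      simp
    rw [Finset.sum_range_succ'] at h0
    simp only [pow_succ] at h0
    have h1 : (∑ i ∈ range (n+1), (-1:ℤ)^i * ((n+1).choose (i+1) : ℤ)) = 1 := by
      have : (∑ i ∈ range (n+1), (-1:ℤ)^i * (-1) * ((n+1).choose (i+1) : ℤ)) + 1 = 0 := by
        simpa using h0
      have h2 : (∑ i ∈ range (n+1), (-1:ℤ)^i * (-1) * ((n+1).choose (i+1) : ℤ))
          = -∑ i ∈ range (n+1), (-1:ℤ)^i * ((n+1).choose (i+1) : ℤ) := by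
        rw [← Finset.sum_neg_distrib]
        apply Finset.sum_congr rfl; intros; ring
      rw [h2] at this; linarith
    calc ∑ i ∈ range (n+1), ((-1:ZMod p))^i * ((n+1).choose (i+1) : ZMod p)
        = ((∑ i ∈ range (n+1), (-1:ℤ)^i * ((n+1).choose (i+1) : ℤ) : ℤ) : ZMod p) := by
          push_cast; rfl
      _ = 1 := by rw [h1]; simp
  apply mul_right_cancel₀ hne
  rw [Finset.sum_mul, inv_mul_cancel₀ hne]
  conv_rhs => rw [← halt]
  apply Finset.sum_congr rfl
  intro i hi
  simp only [mem_range] at hi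
  have hiinv : ((i+1:ℕ) : ZMod p) ≠ 0 := by
    rw [Ne, ZMod.natCast_eq_zero_iff]
    exact Nat.not_dvd_of_pos_of_lt (by omega) (by omega)
  have hsucc : ((n+1 : ℕ) : ZMod p) * (n.choose i : ZMod p)
      = ((n+1).choose (i+1) : ZMod p) * ((i+1:ℕ) : ZMod p) := by
    have := Nat.add_one_mul_choose_eq n i
    exact_mod_cast congrArg (Nat.cast : ℕ → ZMod p) this
  calc (n.choose i : ZMod p) * (-1)^i * ((i+1:ℕ) : ZMod p)⁻¹ * ((n+1:ℕ) : ZMod p)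
      = (((n+1:ℕ) : ZMod p) * (n.choose i : ZMod p)) * (-1)^i * ((i+1:ℕ) : ZMod p)⁻¹ := by ring
    _ = ((n+1).choose (i+1) : ZMod p) * ((i+1:ℕ) : ZMod p) * (-1)^i * ((i+1:ℕ) : ZMod p)⁻¹ := by
        rw [hsucc]
    _ = (-1)^i * ((n+1).choose (i+1) : ZMod p) * (((i+1:ℕ) : ZMod p) * ((i+1:ℕ) : ZMod p)⁻¹) := by
        ring
    _ = (-1)^i * ((n+1).choose (i+1) : ZMod p) := by rw [mul_inv_cancel₀ hiinv, mul_one]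

private lemma glaisher (p : ℕ) (hp : p.Prime) (a b : ℤ) :
    ∃ N : ℤ, (p:ℤ) * N = (a+b)^p - a^p - b^p ∧
      ((N : ZMod p)) = ∑ k ∈ Ico 1 p, (-1)^(k-1) * ((k:ℕ) : ZMod p)⁻¹ * (a:ZMod p)^k * (b:ZMod p)^(p-k) := by
  haveI : Fact p.Prime := ⟨hp⟩
  have hp1 : 1 < p := hp.one_lt
  have hdvd : ∀ k ∈ Ico 1 p, p ∣ p.choose k := by
    intro k hk
    simp only [mem_Ico] at hk
    exact hp.dvd_choose_self (by omega) hk.2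
  refine ⟨∑ k ∈ Ico 1 p, ((p.choose k / p : ℕ) : ℤ) * a^k * b^(p-k), ?_, ?_⟩
  · -- p * N = (a+b)^p - a^p - b^p
    have hexp : (a+b)^p = ∑ k ∈ range (p+1), a^k * b^(p-k) * (p.choose k : ℤ) := add_pow a b p
    have hsplit : ∑ k ∈ range (p+1), a^k * b^(p-k) * (p.choose k : ℤ)
        = b^p + (∑ k ∈ Ico 1 p, a^k * b^(p-k) * (p.choose k : ℤ)) + a^p := by
      rw [Finset.sum_range_succ]
      rw [Finset.range_eq_Ico, Finset.sum_eq_sum_Ico_succ_bot (by omega : 0 < p)]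
      simp [Nat.choose_self, Nat.choose_zero_right]
    rw [Finset.mul_sum]
    rw [hexp, hsplit]
    have : ∑ k ∈ Ico 1 p, (p:ℤ) * (((p.choose k / p : ℕ) : ℤ) * a^k * b^(p-k))
        = ∑ k ∈ Ico 1 p, a^k * b^(p-k) * (p.choose k : ℤ) := by
      apply Finset.sum_congr rfl
      intro k hk
      have h := Nat.div_mul_cancel (hdvd k hk)
      have : ((p.choose k / p * p : ℕ) : ℤ) = (p.choose k : ℤ) := by rw [h]
      push_cast at this ⊢
      linear_combination a ^ k * b ^ (p - k) * this
    rw [this]; ring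
  · rw [Int.cast_sum]
    apply Finset.sum_congr rfl
    intro k hk
    simp only [mem_Ico] at hk
    have hk1 : 1 ≤ k := hk.1
    have hkp : k < p := hk.2
    have hkey : ((p.choose k / p : ℕ) : ZMod p) * (k : ZMod p) = (-1)^(k-1) := by
      have hnat : p * ((p-1).choose (k-1)) = p.choose k * k := by
        have := Nat.add_one_mul_choose_eq (p-1) (k-1)
        rw [show p - 1 + 1 = p by omega, show k - 1 + 1 = k by omega] at this
        exact this
      have hnat2 : (p-1).choose (k-1) = (p.choose k / p) * k := by
        have hd := hdvd k (by simp [mem_Ico]; omega)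
        apply Nat.eq_of_mul_eq_mul_left (show 0 < p by omega)
        rw [hnat, ← Nat.mul_assoc, Nat.mul_comm p (p.choose k / p), Nat.div_mul_cancel hd]
      have hL3 : (((p-1).choose (k-1) : ZMod p)) = (-1)^(k-1) := by
        have := choose_mul_sub_one p 1 hp (by omega) (k-1) (by omega)
        rw [show 1*p - 1 = p - 1 by omega] at this
        exact this
      rw [← hL3, hnat2]
      push_cast; ring
    have hkne : ((k:ℕ) : ZMod p) ≠ 0 := by
      rw [Ne, ZMod.natCast_eq_zero_iff]
      exact Nat.not_dvd_of_pos_of_lt (by omega) hkp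
    have hval : ((p.choose k / p : ℕ) : ZMod p) = (-1)^(k-1) * ((k:ℕ) : ZMod p)⁻¹ := by
      rw [← hkey, mul_assoc, mul_inv_cancel₀ hkne, mul_one]
    simp only [Int.cast_mul, Int.cast_pow, Int.cast_natCast]
    rw [hval]

private lemma f_id (p : ℕ) (hp : p.Prime) (hp3 : 3 < p) :
    ∀ n, n < p → ∑ i ∈ range (n+1), (n.choose i : ZMod p) * 8^i *
        (∑ l ∈ Ico 1 (i+1), ((-8:ZMod p)⁻¹)^l * ((l:ℕ) : ZMod p)⁻¹)
      = -∑ l ∈ Ico 1 (n+1), (9:ZMod p)^(n-l) * ((l:ℕ) : ZMod p)⁻¹ := by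
  haveI : Fact p.Prime := ⟨hp⟩
  have h8 : (8 : ZMod p) ≠ 0 := by
    have h : ((8:ℕ) : ZMod p) ≠ 0 := by
      rw [Ne, ZMod.natCast_eq_zero_iff]
      intro hdvd
      have h2 : p ∣ 2^3 := by norm_num at hdvd ⊢; exact hdvd
      have h3 := Nat.Prime.dvd_of_dvd_pow hp h2
      have := Nat.le_of_dvd (by norm_num) h3
      omega
    push_cast at h
    exact h
  have h8' : (-8 : ZMod p) ≠ 0 := neg_ne_zero.mpr h8
  have h8w : (8 : ZMod p) * (-8 : ZMod p)⁻¹ = -1 := by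
    field_simp
  intro n
  induction n with
  | zero => simp
  | succ n ih =>
    intro hn
    have ihn := ih (by omega)
    set σ : ℕ → ZMod p := fun i => ∑ l ∈ Ico 1 (i+1), ((-8:ZMod p)⁻¹)^l * ((l:ℕ) : ZMod p)⁻¹ with hσ
    have hσ' : ∀ i : ℕ, (∑ l ∈ Ico 1 (i+1), ((-8:ZMod p)⁻¹)^l * ((l:ℕ) : ZMod p)⁻¹) = σ i := by
      intro i; rw [hσ]
    simp only [hσ'] at ihn ⊢
    have hσ0 : σ 0 = 0 := by rw [hσ]; simp
    have hσsucc : ∀ i, σ (i+1) = σ i + ((-8:ZMod p)⁻¹)^(i+1) * ((i+1:ℕ) : ZMod p)⁻¹ := by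
      intro i
      rw [hσ]
      exact Finset.sum_Ico_succ_top (by omega) _
    set G : ℕ → ZMod p := fun i => (n.choose i : ZMod p) * 8^i * σ i with hG
    have hGi : ∀ i, (n.choose i : ZMod p) * 8^i * σ i = G i := by intro i; rw [hG]
    have hGn1 : G (n+1) = 0 := by rw [hG]; simp [Nat.choose_eq_zero_of_lt (by omega : n < n+1)]
    have hG0 : G 0 = 0 := by rw [hG]; simp [hσ0]
    have step1 : ∑ i ∈ range (n+2), ((n+1).choose i : ZMod p) * 8^i * σ i
        = ∑ i ∈ range (n+1), ((n+1).choose (i+1) : ZMod p) * 8^(i+1) * σ (i+1) := by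
      rw [Finset.sum_range_succ']
      simp [hσ0]
    have step2 : ∑ i ∈ range (n+1), ((n+1).choose (i+1) : ZMod p) * 8^(i+1) * σ (i+1)
        = (∑ i ∈ range (n+1), (n.choose i : ZMod p) * 8^(i+1) * σ (i+1))
          + ∑ i ∈ range (n+1), (n.choose (i+1) : ZMod p) * 8^(i+1) * σ (i+1) := by
      rw [← Finset.sum_add_distrib]
      apply Finset.sum_congr rfl
      intro i _
      rw [Nat.choose_succ_succ]
      push_cast
      ring
    have step3 : ∑ i ∈ range (n+1), (n.choose (i+1) : ZMod p) * 8^(i+1) * σ (i+1)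
        = ∑ i ∈ range (n+1), G i := by
      have e1 : ∑ i ∈ range (n+1), (n.choose (i+1) : ZMod p) * 8^(i+1) * σ (i+1)
          = ∑ i ∈ range (n+1), G (i+1) := by
        apply Finset.sum_congr rfl; intro i _; rw [hG]
      rw [e1]
      have h2 : ∑ i ∈ range (n+2), G i = ∑ i ∈ range (n+1), G (i+1) + G 0 :=
        Finset.sum_range_succ' G (n+1)
      have h3 : ∑ i ∈ range (n+2), G i = ∑ i ∈ range (n+1), G i + G (n+1) :=
        Finset.sum_range_succ G (n+1)
      rw [hG0, add_zero] at h2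
      rw [hGn1, add_zero] at h3
      rw [← h2, h3]
    have step4 : ∑ i ∈ range (n+1), (n.choose i : ZMod p) * 8^(i+1) * σ (i+1)
        = 8 * (∑ i ∈ range (n+1), G i)
          + ∑ i ∈ range (n+1), (n.choose i : ZMod p) * (-1)^(i+1) * ((i+1:ℕ) : ZMod p)⁻¹ := by
      rw [Finset.mul_sum, ← Finset.sum_add_distrib]
      apply Finset.sum_congr rfl
      intro i _
      rw [hσsucc i]
      have h81 : (8:ZMod p)^(i+1) * ((-8:ZMod p)⁻¹)^(i+1) = (-1)^(i+1) := by
        rw [← mul_pow, h8w]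
      calc (n.choose i : ZMod p) * 8^(i+1) * (σ i + ((-8:ZMod p)⁻¹)^(i+1) * ((i+1:ℕ):ZMod p)⁻¹)
          = 8 * G i + (n.choose i : ZMod p) * ((8:ZMod p)^(i+1) * ((-8:ZMod p)⁻¹)^(i+1)) * ((i+1:ℕ):ZMod p)⁻¹ := by
            rw [hG]; ring
        _ = _ := by rw [h81]
    have step5 : ∑ i ∈ range (n+1), (n.choose i : ZMod p) * (-1)^(i+1) * ((i+1:ℕ) : ZMod p)⁻¹
        = -((n+1:ℕ) : ZMod p)⁻¹ := by
      have halt := alt_inv_sum p n hp hn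
      calc ∑ i ∈ range (n+1), (n.choose i : ZMod p) * (-1)^(i+1) * ((i+1:ℕ) : ZMod p)⁻¹
          = ∑ i ∈ range (n+1), -((n.choose i : ZMod p) * (-1)^i * ((i+1:ℕ):ZMod p)⁻¹) := by
            apply Finset.sum_congr rfl; intros; ring
        _ = -∑ i ∈ range (n+1), (n.choose i : ZMod p) * (-1)^i * ((i+1:ℕ):ZMod p)⁻¹ := by
            rw [Finset.sum_neg_distrib]
        _ = -((n+1:ℕ) : ZMod p)⁻¹ := by rw [halt]
    have stepR : ∑ l ∈ Ico 1 (n+2), (9:ZMod p)^(n+1-l) * ((l:ℕ) : ZMod p)⁻¹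
        = 9 * (∑ l ∈ Ico 1 (n+1), (9:ZMod p)^(n-l) * ((l:ℕ):ZMod p)⁻¹) + ((n+1:ℕ):ZMod p)⁻¹ := by
      rw [Finset.sum_Ico_succ_top (by omega : 1 ≤ n+1), Finset.mul_sum]
      congr 1
      · apply Finset.sum_congr rfl
        intro l hl
        simp only [mem_Ico] at hl
        rw [show n+1-l = (n-l)+1 by omega, pow_succ]
        ring
      · rw [show n+1-(n+1) = 0 by omega, pow_zero, one_mul]
    rw [show n+1+1 = n+2 from rfl, step1, step2, step3, step4, step5, stepR, ihn]
    ring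

private lemma key1 (p m k : ℕ) (hp : p.Prime) (hp3 : 3 < p) (hm : 2*m+1 = p) (hk : k < p) :
    ((2*k).choose k : ZMod (p^2)) * (-2)^k = (((m*p+m).choose k : ZMod (p^2))) * 8^k := by
  have hm2 : 2 ≤ m := by nlinarith [hm, hp3]
  have hM : 2*(m*p+m) + 1 = p^2 := by subst hm; ring
  have hpM : p ≤ m*p+m := by nlinarith
  have hpodd : ¬ (p ∣ 2) := by
    intro h; have := Nat.le_of_dvd (by norm_num) h; omega
  have hcop : Nat.Coprime (2^k * k.factorial) (p^2) := by
    apply Nat.Coprime.pow_right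
    have h1 : Nat.Coprime p (2^k) := by
      rw [Nat.Prime.coprime_iff_not_dvd hp]
      intro h
      exact hpodd (Nat.Prime.dvd_of_dvd_pow hp h)
    have h2 : Nat.Coprime p (k.factorial) := by
      rw [Nat.Prime.coprime_iff_not_dvd hp, Nat.Prime.dvd_factorial hp]
      omega
    exact (h1.mul_right h2).symm
  have hunit : IsUnit ((2^k * k.factorial : ℕ) : ZMod (p^2)) :=
    (ZMod.isUnit_iff_coprime _ _).mpr hcop
  apply hunit.mul_left_cancel
  have hL : ((2^k * k.factorial : ℕ) : ZMod (p^2)) * (((2*k).choose k : ZMod (p^2)) * (-2)^k)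
      = (-8)^k * ∏ j ∈ range k, (2*(j : ZMod (p^2))+1) := by
    have hc := cb_mul k
    have hcast : (((2*k).choose k : ZMod (p^2))) * (k.factorial : ZMod (p^2))
        = 2^k * ∏ j ∈ range k, (2*(j : ZMod (p^2))+1) := by
      have : (((2*k).choose k * k.factorial : ℕ) : ZMod (p^2))
          = ((2^k * ∏ j ∈ range k, (2*j+1) : ℕ) : ZMod (p^2)) := by rw [hc]
      push_cast at this
      exact this
    push_cast
    calc (2:ZMod (p^2))^k * (k.factorial : ZMod (p^2)) * (((2*k).choose k : ZMod (p^2)) * (-2)^k)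
        = ((((2*k).choose k : ZMod (p^2))) * (k.factorial : ZMod (p^2))) * (2^k * (-2)^k) := by ring
      _ = (2^k * ∏ j ∈ range k, (2*(j : ZMod (p^2))+1)) * (2^k * (-2)^k) := by rw [hcast]
      _ = (-8)^k * ∏ j ∈ range k, (2*(j : ZMod (p^2))+1) := by
          rw [show ((-8):ZMod (p^2)) = 2*(2*(-2)) by norm_num, mul_pow, mul_pow]
          ring
  have hR : ((2^k * k.factorial : ℕ) : ZMod (p^2)) * ((((m*p+m).choose k : ZMod (p^2))) * 8^k)
      = 8^k * (-1)^k * ∏ j ∈ range k, (2*(j : ZMod (p^2))+1) := by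
    have hdesc : (m*p+m).descFactorial k = k.factorial * (m*p+m).choose k :=
      Nat.descFactorial_eq_factorial_mul_choose _ _
    have hprod : (m*p+m).descFactorial k = ∏ j ∈ range k, (m*p+m - j) :=
      Nat.descFactorial_eq_prod_range _ _
    have hcast : ((k.factorial * (m*p+m).choose k : ℕ) : ZMod (p^2))
        = ∏ j ∈ range k, (((m*p+m : ℕ) : ZMod (p^2)) - (j : ZMod (p^2))) := by
      rw [← hdesc, hprod, Nat.cast_prod]
      apply Finset.prod_congr rfl
      intro j hj
      simp only [mem_range] at hj
      rw [Nat.cast_sub (le_trans (le_of_lt (lt_trans hj hk)) hpM)]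
    have hMzero : (2:ZMod (p^2)) * ((m*p+m : ℕ) : ZMod (p^2)) + 1 = 0 := by
      have h0 : ((2*(m*p+m)+1 : ℕ) : ZMod (p^2)) = ((p^2 : ℕ) : ZMod (p^2)) := by rw [hM]
      rw [ZMod.natCast_self] at h0
      push_cast at h0 ⊢
      linear_combination h0
    have hfac : ∀ j ∈ range k, (2:ZMod (p^2)) * (((m*p+m : ℕ) : ZMod (p^2)) - (j:ZMod (p^2)))
        = -(2*(j : ZMod (p^2))+1) := by
      intro j _
      push_cast at hMzero ⊢
      linear_combination hMzero
    calc ((2^k * k.factorial : ℕ) : ZMod (p^2)) * ((((m*p+m).choose k : ZMod (p^2))) * 8^k)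
        = ((k.factorial * (m*p+m).choose k : ℕ) : ZMod (p^2)) * (((2:ZMod (p^2)))^k * 8^k) := by
          push_cast; ring
      _ = (∏ j ∈ range k, (((m*p+m : ℕ) : ZMod (p^2)) - (j : ZMod (p^2)))) * (2^k * 8^k) := by
          rw [hcast]
      _ = (∏ j ∈ range k, ((2:ZMod (p^2)) * (((m*p+m : ℕ) : ZMod (p^2)) - (j : ZMod (p^2))))) * 8^k := by
          rw [Finset.prod_mul_distrib, Finset.prod_const, Finset.card_range]
          ring
      _ = (∏ j ∈ range k, (-(2*(j : ZMod (p^2))+1))) * 8^k := by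
          rw [Finset.prod_congr rfl hfac]
      _ = 8^k * (-1)^k * ∏ j ∈ range k, (2*(j : ZMod (p^2))+1) := by
          rw [show (∏ j ∈ range k, (-(2*(j : ZMod (p^2))+1)))
              = ∏ j ∈ range k, ((-1 : ZMod (p^2)) * (2*(j : ZMod (p^2))+1)) by
            apply Finset.prod_congr rfl; intros; ring]
          rw [Finset.prod_mul_distrib, Finset.prod_const, Finset.card_range]
          ring
  rw [hL, hR]
  rw [show ((8:ZMod (p^2))^k * (-1)^k) = (8 * -1 : ZMod (p^2))^k by rw [mul_pow]]
  norm_num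

private lemma W_mod (p m : ℕ) (hp : p.Prime) (hp3 : 3 < p) (hm : 2*m+1 = p)
    (B : ℕ → ℕ)
    (hB : ∀ j, 1 ≤ j → j < p → ((j:ℕ) : ZMod p) * (B j : ZMod p) = (m : ZMod p) * (-1)^(j-1))
    (u v : ℤ) (hu : (2:ℤ)^p - 2 = (p:ℤ) * u) (hv : (3:ℤ)^p - 3 = (p:ℤ) * v) :
    (∑ k ∈ range p, ∑ i ∈ range k, (B (i+1) : ZMod p) * (m.choose (k-(i+1)) : ZMod p) * 8^k) * 3
      = -2*(u : ZMod p) - (v : ZMod p) := by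
  haveI : Fact p.Prime := ⟨hp⟩
  have hm2 : 2 ≤ m := by nlinarith [hm, hp3]
  have hmp : m < p := by omega
  have hm1p : m + 1 ≤ p := by omega
  -- nonzero facts
  have hnz : ∀ l : ℕ, 1 ≤ l → l < p → ((l:ℕ) : ZMod p) ≠ 0 := by
    intro l h1 h2
    rw [Ne, ZMod.natCast_eq_zero_iff]
    exact Nat.not_dvd_of_pos_of_lt (by omega) h2
  have hnd : ∀ q : ℕ, 1 ≤ q → q < p → ¬ (p ∣ q) := fun q h1 h2 =>
    Nat.not_dvd_of_pos_of_lt (by omega) h2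
  have h2z : (2 : ZMod p) ≠ 0 := by
    have := hnz 2 (by omega) (by omega); push_cast at this; exact this
  have h3z : (3 : ZMod p) ≠ 0 := by
    have := hnz 3 (by omega) (by omega); push_cast at this; exact this
  have h8z : (8 : ZMod p) ≠ 0 := by
    intro h
    apply h2z
    have : (2:ZMod p)^3 = 0 := by rw [show (2:ZMod p)^3 = 8 by norm_num, h]
    exact pow_eq_zero_iff (by norm_num)|>.mp this
  have h9z : (9 : ZMod p) ≠ 0 := by
    intro h
    apply h3z
    have : (3:ZMod p)^2 = 0 := by rw [show (3:ZMod p)^2 = 9 by norm_num, h]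
    exact pow_eq_zero_iff (by norm_num)|>.mp this
  -- B value lemma
  have hBj : ∀ j, 1 ≤ j → j < p →
      (B j : ZMod p) = (m : ZMod p) * (-1)^(j-1) * ((j:ℕ) : ZMod p)⁻¹ := by
    intro j h1 h2
    apply mul_left_cancel₀ (hnz j h1 h2)
    rw [hB j h1 h2]
    field_simp
    rw [mul_div_cancel_right₀ _ (hnz j h1 h2)]
  -- Step A : reshape double sum
  have stepA : (∑ k ∈ range p, ∑ i ∈ range k, (B (i+1) : ZMod p) * (m.choose (k-(i+1)) : ZMod p) * 8^k)
      = ∑ k ∈ Ico 1 p, ∑ j ∈ Ico 1 (k+1), (B j : ZMod p) * (m.choose (k-j) : ZMod p) * 8^k := by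
    rw [(Finset.sum_subset (show Ico 1 p ⊆ range p by
        intro x hx; simp only [mem_Ico] at hx; simp only [mem_range]; omega)
      (by
        intro x hx hnx
        simp only [mem_range] at hx
        simp only [mem_Ico] at hnx
        have : x = 0 := by omega
        subst this
        simp)).symm]
    apply Finset.sum_congr rfl
    intro k _
    rw [Finset.sum_Ico_eq_sum_range]
    simp only [Nat.add_sub_cancel]
    apply Finset.sum_congr rfl
    intro i _
    rw [add_comm 1 i]
  -- Step B : swap
  have stepB : ∑ k ∈ Ico 1 p, ∑ j ∈ Ico 1 (k+1), (B j : ZMod p) * (m.choose (k-j) : ZMod p) * 8^k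
      = ∑ j ∈ Ico 1 p, ∑ k ∈ Ico j p, (B j : ZMod p) * (m.choose (k-j) : ZMod p) * 8^k :=
    (Finset.sum_Ico_Ico_comm 1 p (fun j k => (B j : ZMod p) * (m.choose (k-j) : ZMod p) * 8^k)).symm
  -- Step C : inner reindex
  have stepC : ∀ j ∈ Ico 1 p, ∑ k ∈ Ico j p, (B j : ZMod p) * (m.choose (k-j) : ZMod p) * 8^k
      = (B j : ZMod p) * 8^j * ∑ i ∈ range (p-j), (m.choose i : ZMod p) * 8^i := by
    intro j hj
    rw [Finset.sum_Ico_eq_sum_range, Finset.mul_sum]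
    apply Finset.sum_congr rfl
    intro i _
    rw [Nat.add_sub_cancel_left, pow_add]
    ring
  -- binomial
  have binom9 : ∑ i ∈ range (m+1), (m.choose i : ZMod p) * 8^i = 9^m := by
    have h := add_pow (8 : ZMod p) 1 m
    rw [show (8:ZMod p) + 1 = 9 by norm_num] at h
    rw [h]
    apply Finset.sum_congr rfl
    intros; simp; ring
  -- Step D : inner sum eval
  have stepD : ∀ j ∈ Ico 1 p, (∑ i ∈ range (p-j), (m.choose i : ZMod p) * 8^i)
      = 9^m - ∑ i ∈ Ico (p-j) (m+1), (m.choose i : ZMod p) * 8^i := by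
    intro j hj
    simp only [mem_Ico] at hj
    by_cases hc : p - j ≤ m+1
    · have hsplit := Finset.sum_Ico_consecutive (fun i => (m.choose i : ZMod p) * 8^i)
        (show 0 ≤ p - j by omega) hc
      rw [← Finset.range_eq_Ico, ← Finset.range_eq_Ico] at hsplit
      rw [← binom9, ← hsplit]
      rw [Finset.range_eq_Ico]
      ring
    · have hempty : Ico (p-j) (m+1) = ∅ := Finset.Ico_eq_empty (by omega)
      rw [hempty, Finset.sum_empty, sub_zero, ← binom9]
      refine (Finset.sum_subset ?_ ?_).symm
      · intro x hx; simp only [mem_range] at hx ⊢; omega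
      · intro x hx hnx
        simp only [mem_range] at hx hnx
        have : m < x := by omega
        rw [Nat.choose_eq_zero_of_lt this]
        push_cast; ring
  -- assemble W so far
  have stepE : (∑ k ∈ range p, ∑ i ∈ range k, (B (i+1) : ZMod p) * (m.choose (k-(i+1)) : ZMod p) * 8^k)
      = 9^m * (∑ j ∈ Ico 1 p, (B j : ZMod p) * 8^j)
        - ∑ j ∈ Ico 1 p, (B j : ZMod p) * 8^j * (∑ i ∈ Ico (p-j) (m+1), (m.choose i : ZMod p) * 8^i) := by
    rw [stepA, stepB]
    rw [Finset.sum_congr rfl stepC]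
    rw [Finset.mul_sum, ← Finset.sum_sub_distrib]
    apply Finset.sum_congr rfl
    intro j hj
    rw [stepD j hj]
    ring
  have h8z' : (-8 : ZMod p) ≠ 0 := neg_ne_zero.mpr h8z
  -- Glaisher instance 1
  obtain ⟨N1, hN1p, hN1F⟩ := glaisher p hp 8 1
  have piece1 : (∑ j ∈ Ico 1 p, (B j : ZMod p) * 8^j) = (m : ZMod p) * (N1 : ZMod p) := by
    rw [hN1F, Finset.mul_sum]
    apply Finset.sum_congr rfl
    intro j hj
    simp only [mem_Ico] at hj
    rw [hBj j hj.1 hj.2]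
    push_cast
    ring
  -- tail : zero below m+1
  have tail0 : ∀ j ∈ Ico 1 (m+1), (B j : ZMod p) * 8^j * (∑ i ∈ Ico (p-j) (m+1), (m.choose i : ZMod p) * 8^i) = 0 := by
    intro j hj
    simp only [mem_Ico] at hj
    have he : Ico (p-j) (m+1) = ∅ := Finset.Ico_eq_empty (by omega)
    rw [he, Finset.sum_empty, mul_zero]
  have tailsplit : ∑ j ∈ Ico 1 p, (B j : ZMod p) * 8^j * (∑ i ∈ Ico (p-j) (m+1), (m.choose i : ZMod p) * 8^i)
      = ∑ j ∈ Ico (m+1) p, (B j : ZMod p) * 8^j * (∑ i ∈ Ico (p-j) (m+1), (m.choose i : ZMod p) * 8^i) := by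
    rw [← Finset.sum_Ico_consecutive _ (show 1 ≤ m+1 by omega) (show m+1 ≤ p by omega)]
    rw [Finset.sum_eq_zero tail0, zero_add]
  have tailreindex : ∑ j ∈ Ico (m+1) p, (B j : ZMod p) * 8^j * (∑ i ∈ Ico (p-j) (m+1), (m.choose i : ZMod p) * 8^i)
      = ∑ l ∈ Ico 1 (m+1), (B (p-l) : ZMod p) * 8^(p-l) * (∑ i ∈ Ico l (m+1), (m.choose i : ZMod p) * 8^i) := by
    refine Finset.sum_nbij' (fun j => p - j) (fun l => p - l) ?_ ?_ ?_ ?_ ?_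
    · intro a ha; simp only [mem_Ico] at ha ⊢; omega
    · intro a ha; simp only [mem_Ico] at ha ⊢; omega
    · intro a ha; simp only [mem_Ico] at ha; show p - (p - a) = a; omega
    · intro a ha; simp only [mem_Ico] at ha; show p - (p - a) = a; omega
    · intro a ha; simp only [mem_Ico] at ha
      rw [show p - (p - a) = a by omega]
  -- coefficient
  have coeff : ∀ l ∈ Ico 1 (m+1), (B (p-l) : ZMod p) * 8^(p-l)
      = -((m:ZMod p) * 8^p) * (((-8:ZMod p)⁻¹)^l * ((l:ℕ) : ZMod p)⁻¹) := by
    intro l hl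
    simp only [mem_Ico] at hl
    have h1 : 1 ≤ p - l := by omega
    have h2 : p - l < p := by omega
    rw [hBj (p-l) h1 h2]
    have hcastl : ((p-l : ℕ) : ZMod p) = -((l:ℕ) : ZMod p) := by
      rw [Nat.cast_sub (by omega : l ≤ p), ZMod.natCast_self]
      ring
    have e2 : ((-1 : ZMod p))^l * (-1)^l = 1 := by
      rw [← pow_add]
      exact Even.neg_one_pow ⟨l, by omega⟩
    have hpar : ((-1 : ZMod p))^(p-l-1) = (-1)^l := by
      have e1 : ((-1 : ZMod p))^(p-l-1) * (-1)^l = 1 := by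
        rw [← pow_add, show p-l-1+l = p-1 by omega]
        exact Even.neg_one_pow ⟨m, by omega⟩
      calc ((-1 : ZMod p))^(p-l-1)
          = ((-1 : ZMod p))^(p-l-1) * (((-1:ZMod p))^l * (-1)^l) := by rw [e2, mul_one]
        _ = (((-1 : ZMod p))^(p-l-1) * (-1)^l) * (-1)^l := by ring
        _ = (-1)^l := by rw [e1, one_mul]
    rw [hcastl, hpar, inv_neg]
    rw [show (8:ZMod p)^(p-l) = 8^p * ((8:ZMod p)^l)⁻¹ by
      rw [show (8:ZMod p)^p = 8^(p-l) * 8^l by rw [← pow_add, show p-l+l = p by omega]]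
      rw [mul_assoc, mul_inv_cancel₀ (pow_ne_zero _ h8z), mul_one]]
    rw [show (((-8):ZMod p)⁻¹)^l = (-1)^l * ((8:ZMod p)^l)⁻¹ by
      rw [inv_pow, show (-8:ZMod p) = (-1)*8 by ring, mul_pow, mul_inv, ← inv_pow, inv_neg_one]]
    ring
  have tailP : ∑ j ∈ Ico 1 p, (B j : ZMod p) * 8^j * (∑ i ∈ Ico (p-j) (m+1), (m.choose i : ZMod p) * 8^i)
      = -((m:ZMod p) * 8^p) * ∑ l ∈ Ico 1 (m+1),
          (((-8:ZMod p)⁻¹)^l * ((l:ℕ) : ZMod p)⁻¹ * ∑ i ∈ Ico l (m+1), (m.choose i : ZMod p) * 8^i) := by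
    rw [tailsplit, tailreindex, Finset.mul_sum]
    apply Finset.sum_congr rfl
    intro l hl
    rw [coeff l hl]
    ring
  -- swap the tail double sum
  have swap2 : ∑ l ∈ Ico 1 (m+1), (((-8:ZMod p)⁻¹)^l * ((l:ℕ) : ZMod p)⁻¹ * ∑ i ∈ Ico l (m+1), (m.choose i : ZMod p) * 8^i)
      = ∑ i ∈ Ico 1 (m+1), ((m.choose i : ZMod p) * 8^i * ∑ l ∈ Ico 1 (i+1), ((-8:ZMod p)⁻¹)^l * ((l:ℕ) : ZMod p)⁻¹) := by
    calc ∑ l ∈ Ico 1 (m+1), (((-8:ZMod p)⁻¹)^l * ((l:ℕ) : ZMod p)⁻¹ * ∑ i ∈ Ico l (m+1), (m.choose i : ZMod p) * 8^i)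
        = ∑ l ∈ Ico 1 (m+1), ∑ i ∈ Ico l (m+1), (((-8:ZMod p)⁻¹)^l * ((l:ℕ) : ZMod p)⁻¹ * ((m.choose i : ZMod p) * 8^i)) := by
          apply Finset.sum_congr rfl; intros; rw [Finset.mul_sum]
      _ = ∑ i ∈ Ico 1 (m+1), ∑ l ∈ Ico 1 (i+1), (((-8:ZMod p)⁻¹)^l * ((l:ℕ) : ZMod p)⁻¹ * ((m.choose i : ZMod p) * 8^i)) :=
          Finset.sum_Ico_Ico_comm 1 (m+1) _
      _ = ∑ i ∈ Ico 1 (m+1), ((m.choose i : ZMod p) * 8^i * ∑ l ∈ Ico 1 (i+1), ((-8:ZMod p)⁻¹)^l * ((l:ℕ) : ZMod p)⁻¹) := by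
          apply Finset.sum_congr rfl; intros
          rw [Finset.mul_sum]
          apply Finset.sum_congr rfl; intros
          ring
  have ext0 : ∑ i ∈ Ico 1 (m+1), ((m.choose i : ZMod p) * 8^i * ∑ l ∈ Ico 1 (i+1), ((-8:ZMod p)⁻¹)^l * ((l:ℕ):ZMod p)⁻¹)
      = ∑ i ∈ range (m+1), ((m.choose i : ZMod p) * 8^i * ∑ l ∈ Ico 1 (i+1), ((-8:ZMod p)⁻¹)^l * ((l:ℕ):ZMod p)⁻¹) := by
    rw [Finset.range_eq_Ico, Finset.sum_eq_sum_Ico_succ_bot (show 0 < m+1 by omega)]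
    rw [show Ico 1 (0+1) = (∅ : Finset ℕ) by simp]
    simp
  have fid := f_id p hp hp3 m hmp
  -- A2 = 9^m * A3
  have hA2 : ∑ l ∈ Ico 1 (m+1), (9:ZMod p)^(m-l) * ((l:ℕ):ZMod p)⁻¹
      = 9^m * ∑ l ∈ Ico 1 (m+1), ((9:ZMod p)^l)⁻¹ * ((l:ℕ):ZMod p)⁻¹ := by
    rw [Finset.mul_sum]
    apply Finset.sum_congr rfl
    intro l hl
    simp only [mem_Ico] at hl
    rw [show (9:ZMod p)^(m-l) = 9^m * ((9:ZMod p)^l)⁻¹ by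
      rw [show (9:ZMod p)^m = 9^(m-l) * 9^l by rw [← pow_add, show m-l+l = m by omega]]
      rw [mul_assoc, mul_inv_cancel₀ (pow_ne_zero _ h9z), mul_one]]
    ring
  -- parity split
  have parity : (∑ k ∈ Ico 1 p, ((3:ZMod p)⁻¹)^k * ((k:ℕ):ZMod p)⁻¹)
        + (∑ k ∈ Ico 1 p, (-(3:ZMod p)⁻¹)^k * ((k:ℕ):ZMod p)⁻¹)
      = ∑ l ∈ Ico 1 (m+1), ((9:ZMod p)^l)⁻¹ * ((l:ℕ):ZMod p)⁻¹ := by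
    rw [← Finset.sum_add_distrib]
    have hterm : ∀ k ∈ Ico 1 p, ((3:ZMod p)⁻¹)^k * ((k:ℕ):ZMod p)⁻¹ + (-(3:ZMod p)⁻¹)^k * ((k:ℕ):ZMod p)⁻¹
        = (if Even k then 2 * ((3:ZMod p)⁻¹)^k * ((k:ℕ):ZMod p)⁻¹ else 0) := by
      intro k _
      by_cases hk : Even k
      · rw [if_pos hk, hk.neg_pow]; ring
      · rw [if_neg hk, (Nat.not_even_iff_odd.mp hk).neg_pow]; ring
    rw [Finset.sum_congr rfl hterm, ← Finset.sum_filter]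
    refine Finset.sum_nbij' (fun k => k/2) (fun l => 2*l) ?_ ?_ ?_ ?_ ?_
    · intro a ha
      simp only [mem_filter, mem_Ico, Nat.even_iff] at ha ⊢
      omega
    · intro a ha
      simp only [mem_filter, mem_Ico, Nat.even_iff] at ha ⊢
      omega
    · intro a ha
      simp only [mem_filter, mem_Ico, Nat.even_iff] at ha
      show 2*(a/2) = a
      omega
    · intro a ha
      simp only [mem_Ico] at ha
      show (2*a)/2 = a
      omega
    · intro k hk
      simp only [mem_filter, mem_Ico] at hk
      obtain ⟨⟨hk1, hk2⟩, ht⟩ := hk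
      obtain ⟨t, rfl⟩ := ht
      show 2 * ((3:ZMod p)⁻¹)^(t+t) * (((t+t:ℕ)):ZMod p)⁻¹
          = ((9:ZMod p)^((t+t)/2))⁻¹ * ((((t+t)/2 : ℕ)):ZMod p)⁻¹
      rw [show (t+t)/2 = t by omega]
      have e1 : ((3:ZMod p)⁻¹)^(t+t) = ((9:ZMod p)^t)⁻¹ := by
        rw [← two_mul, pow_mul]
        rw [show ((3:ZMod p)⁻¹)^2 = ((9:ZMod p))⁻¹ by
          rw [inv_pow, show (3:ZMod p)^2 = 9 by norm_num]]
        rw [inv_pow]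
      have e2 : ((t+t:ℕ):ZMod p)⁻¹ = 2⁻¹ * ((t:ℕ):ZMod p)⁻¹ := by
        push_cast
        rw [show ((t:ZMod p) + t) = 2 * t by ring, mul_inv]
      rw [e1, e2]
      have h22 : (2:ZMod p) * 2⁻¹ = 1 := mul_inv_cancel₀ h2z
      linear_combination ((9:ZMod p)^t)⁻¹ * ((t:ℕ):ZMod p)⁻¹ * h22
  -- Glaisher instances 2,3
  obtain ⟨N2, hN2p, hN2F⟩ := glaisher p hp (-1) 3
  obtain ⟨N3, hN3p, hN3F⟩ := glaisher p hp 1 3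
  have h3card : (3:ZMod p)^p = 3 := ZMod.pow_card 3
  have h3pk : ∀ k ∈ Ico 1 p, (3:ZMod p)^(p-k) = 3 * ((3:ZMod p)^k)⁻¹ := by
    intro k hk
    simp only [mem_Ico] at hk
    have hsplit : (3:ZMod p)^(p-k) * (3:ZMod p)^k = 3 := by
      rw [← pow_add, show p-k+k = p by omega]; exact h3card
    calc (3:ZMod p)^(p-k) = (3:ZMod p)^(p-k) * ((3:ZMod p)^k * ((3:ZMod p)^k)⁻¹) := by
          rw [mul_inv_cancel₀ (pow_ne_zero _ h3z), mul_one]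
      _ = ((3:ZMod p)^(p-k) * (3:ZMod p)^k) * ((3:ZMod p)^k)⁻¹ := by ring
      _ = 3 * ((3:ZMod p)^k)⁻¹ := by rw [hsplit]
  have hF1 : (N2 : ZMod p) = -3 * ∑ k ∈ Ico 1 p, ((3:ZMod p)⁻¹)^k * ((k:ℕ):ZMod p)⁻¹ := by
    rw [hN2F, Finset.mul_sum]
    apply Finset.sum_congr rfl
    intro k hk
    have hk' := hk
    simp only [mem_Ico] at hk'
    have hsign : ((-1:ZMod p))^(k-1) * (-1)^k = -1 := by
      rw [← pow_add, show k-1+k = 2*(k-1)+1 by omega, pow_succ, pow_mul]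
      norm_num
    have h3pk' := h3pk k hk
    push_cast
    rw [h3pk', inv_pow]
    linear_combination (3:ZMod p) * ((3:ZMod p)^k)⁻¹ * ((k:ℕ):ZMod p)⁻¹ * hsign
  have hF2 : (N3 : ZMod p) = -3 * ∑ k ∈ Ico 1 p, (-(3:ZMod p)⁻¹)^k * ((k:ℕ):ZMod p)⁻¹ := by
    rw [hN3F, Finset.mul_sum]
    apply Finset.sum_congr rfl
    intro k hk
    have hk' := hk
    simp only [mem_Ico] at hk'
    have hsign : ((-1:ZMod p))^(k-1) = -(-1:ZMod p)^k := by
      have h := pow_succ (-1:ZMod p) (k-1)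
      rw [show k-1+1 = k by omega] at h
      linear_combination h
    have h3pk' := h3pk k hk
    push_cast
    rw [h3pk', hsign, neg_pow (3⁻¹ : ZMod p), inv_pow]
    ring
  -- integer computations for N1, N2+N3
  have hpz : (p:ℤ) ≠ 0 := Int.natCast_ne_zero.mpr (by omega)
  have h2p : (2:ℤ)^p = 2 + p*u := by linarith [hu]
  have h3p' : (3:ℤ)^p = 3 + p*v := by linarith [hv]
  have hodd : Odd p := ⟨m, by omega⟩
  have hN1val : (N1 : ZMod p) = 6*(v:ZMod p) - 12*(u:ZMod p) := by
    have h9 : ((8:ℤ)+1)^p = ((3:ℤ)^p)^2 := by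
      rw [show ((8:ℤ)+1) = 3^2 by norm_num, ← pow_mul, mul_comm, pow_mul]
    have h8 : (8:ℤ)^p = ((2:ℤ)^p)^3 := by
      rw [show (8:ℤ) = 2^3 by norm_num, ← pow_mul, mul_comm, pow_mul]
    have hNint : (p:ℤ) * N1 = (p:ℤ) * (6*v - 12*u + p*(v^2 - 6*u^2 - p*u^3)) := by
      rw [hN1p, h9, h8, h3p', h2p]
      ring
    have hN1eq : N1 = 6*v - 12*u + p*(v^2 - 6*u^2 - p*u^3) := mul_left_cancel₀ hpz hNint
    rw [hN1eq]
    push_cast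
    rw [ZMod.natCast_self]
    ring
  have hN23val : (N2 : ZMod p) + (N3 : ZMod p) = 5*(u:ZMod p) - 2*(v:ZMod p) := by
    have h4 : ((1:ℤ)+3)^p = ((2:ℤ)^p)^2 := by
      rw [show ((1:ℤ)+3) = 2^2 by norm_num, ← pow_mul, mul_comm, pow_mul]
    have h2' : ((-1:ℤ)+3)^p = (2:ℤ)^p := by norm_num
    have hNint : (p:ℤ) * (N2 + N3) = (p:ℤ) * (5*u - 2*v + p*u^2) := by
      rw [mul_add, hN2p, hN3p, h4, h2', hodd.neg_one_pow, h2p, h3p']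
      ring
    have hNeq : N2 + N3 = 5*u - 2*v + p*u^2 := mul_left_cancel₀ hpz hNint
    have : ((N2 + N3 : ℤ) : ZMod p) = ((5*u - 2*v + p*u^2 : ℤ) : ZMod p) := by rw [hNeq]
    push_cast at this
    rw [ZMod.natCast_self] at this
    linear_combination this
  -- final facts
  have f8p : (8:ZMod p)^p = 8 := ZMod.pow_card 8
  have f9m : (9:ZMod p)^m = 1 := by
    have h2 : (9:ZMod p)^m * 3 = 3 := by
      rw [show (9:ZMod p) = 3^2 by norm_num, ← pow_mul, ← pow_succ, show 2*m+1 = p from hm, h3card]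
    calc (9:ZMod p)^m = (9:ZMod p)^m * 3 * 3⁻¹ := by
          rw [mul_assoc, mul_inv_cancel₀ h3z, mul_one]
      _ = 3 * 3⁻¹ := by rw [h2]
      _ = 1 := mul_inv_cancel₀ h3z
  have fmF : 2*(m:ZMod p) = -1 := by
    have h0 : ((2*m+1 : ℕ):ZMod p) = 0 := by rw [hm]; exact ZMod.natCast_self p
    push_cast at h0
    linear_combination h0
  -- assemble
  rw [stepE, piece1, tailP, swap2, ext0, fid, hA2, ← parity, f9m, f8p, hN1val]
  linear_combination (-8*(m:ZMod p))*hF1 + (-8*(m:ZMod p))*hF2 + 8*(m:ZMod p)*hN23val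
    + (2*(u:ZMod p)+(v:ZMod p))*fmF

theorem central_binom_neg_two_sum (p : ℕ) (hp : p.Prime) (hp3 : 3 < p)
    (y : ℤ) (hy : 3 * y ≡ 1 [ZMOD (p : ℤ) ^ 2]) :
    ∑ k ∈ range p, ((2 * k).choose k : ℤ) * (-2 : ℤ) ^ k ≡
      1 - 4 * y * (2 ^ (p - 1) - 1) [ZMOD (p : ℤ) ^ 2] := by
  haveI : Fact p.Prime := ⟨hp⟩
  obtain ⟨m, hm⟩ : ∃ m, 2*m+1 = p := by
    have hne2 : p ≠ 2 := by omega
    have hodd := hp.odd_of_ne_two hne2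
    rw [Nat.odd_iff] at hodd
    exact ⟨(p-1)/2, by omega⟩
  have hm2 : 2 ≤ m := by omega
  have hmp : m < p := by omega
  set B : ℕ → ℕ := fun j => (m*p).choose j / p with hBdef
  have hmp1 : 1 ≤ m*p := by
    calc 1 ≤ 1*1 := by norm_num
      _ ≤ m*p := Nat.mul_le_mul (by omega) (by omega)
  have hdvd : ∀ j, 1 ≤ j → j < p → p ∣ (m*p).choose j := by
    intro j h1 h2
    have hkey := Nat.add_one_mul_choose_eq (m*p-1) (j-1)
    rw [Nat.sub_add_cancel hmp1,
      Nat.sub_add_cancel h1] at hkey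
    have hpd : p ∣ (m*p).choose j * j :=
      ⟨m * ((m*p-1).choose (j-1)), by rw [← hkey]; ring⟩
    have hcop : Nat.Coprime p j := (Nat.Prime.coprime_iff_not_dvd hp).mpr
      (Nat.not_dvd_of_pos_of_lt (by omega) h2)
    exact hcop.dvd_of_dvd_mul_right hpd
  have hBmul : ∀ j, 1 ≤ j → j < p → (m*p).choose j = p * B j := by
    intro j h1 h2
    rw [hBdef]
    exact (Nat.mul_div_cancel' (hdvd j h1 h2)).symm
  have hB : ∀ j, 1 ≤ j → j < p →
      ((j:ℕ) : ZMod p) * (B j : ZMod p) = (m : ZMod p) * (-1)^(j-1) := by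
    intro j h1 h2
    have hkey := Nat.add_one_mul_choose_eq (m*p-1) (j-1)
    rw [Nat.sub_add_cancel hmp1,
      Nat.sub_add_cancel h1] at hkey
    have hmx : m * ((m*p-1).choose (j-1)) = B j * j := by
      apply Nat.eq_of_mul_eq_mul_left (show 0 < p by omega)
      calc p * (m * ((m*p-1).choose (j-1))) = m*p * ((m*p-1).choose (j-1)) := by ring
        _ = (m*p).choose j * j := hkey
        _ = (p * B j) * j := by rw [← hBmul j h1 h2]
        _ = p * (B j * j) := by ring
    have hcast : ((m : ZMod p)) * (((m*p-1).choose (j-1) : ZMod p)) = (B j : ZMod p) * ((j:ℕ) : ZMod p) := by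
      exact_mod_cast congrArg (Nat.cast : ℕ → ZMod p) hmx
    rw [choose_mul_sub_one p m hp (by omega) (j-1) (by omega)] at hcast
    linear_combination -hcast
  obtain ⟨u, hu⟩ : (p:ℤ) ∣ 2^p - 2 := by
    have h0 : (((2:ℤ)^p - 2 : ℤ) : ZMod p) = 0 := by
      push_cast
      rw [ZMod.pow_card]
      ring
    exact_mod_cast (ZMod.intCast_zmod_eq_zero_iff_dvd _ p).mp h0
  obtain ⟨v, hv⟩ : (p:ℤ) ∣ 3^p - 3 := by
    have h0 : (((3:ℤ)^p - 3 : ℤ) : ZMod p) = 0 := by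
      push_cast
      rw [ZMod.pow_card]
      ring
    exact_mod_cast (ZMod.intCast_zmod_eq_zero_iff_dvd _ p).mp h0
  set WZ : ℤ := ∑ k ∈ range p, ∑ i ∈ range k,
      ((B (i+1) : ℤ) * (m.choose (k-(i+1)) : ℤ) * 8^k) with hWZ
  have hbin : ∑ k ∈ range (m+1), (m.choose k : ℤ) * 8^k = 9^m := by
    have h := add_pow (8:ℤ) 1 m
    rw [show (8:ℤ)+1 = 9 by norm_num] at h
    rw [h]
    apply Finset.sum_congr rfl
    intros; simp; ring
  have hbin9 : ∑ k ∈ range p, (m.choose k : ℤ) * 8^k = 9^m := by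
    rw [← hbin]
    refine (Finset.sum_subset (fun x hx => ?_) (fun x hx hnx => ?_)).symm
    · simp only [mem_range] at *; omega
    · simp only [mem_range] at hx hnx
      rw [Nat.choose_eq_zero_of_lt (by omega)]
      push_cast; ring
  have hchoose_split : ∀ k : ℕ, ((m*p+m).choose k : ℤ)
      = (m.choose k : ℤ) + ∑ i ∈ range k, ((m*p).choose (i+1) : ℤ) * (m.choose (k-(i+1)) : ℤ) := by
    intro k
    have h1 : (m*p+m).choose k = ∑ j ∈ range (k+1), (m*p).choose j * m.choose (k-j) := by
      rw [Nat.add_choose_eq]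
      exact Finset.Nat.sum_antidiagonal_eq_sum_range_succ_mk _ k
    rw [h1, Finset.sum_range_succ']
    push_cast
    simp
    ring
  have hsplitZ : (∑ k ∈ range p, (((m*p+m).choose k : ℤ)) * 8^k) = 9^m + (p:ℤ) * WZ := by
    calc ∑ k ∈ range p, (((m*p+m).choose k : ℤ)) * 8^k
        = ∑ k ∈ range p, ((m.choose k : ℤ) * 8^k
            + ∑ i ∈ range k, ((m*p).choose (i+1) : ℤ) * (m.choose (k-(i+1)) : ℤ) * 8^k) := by
          apply Finset.sum_congr rfl
          intro k _
          rw [hchoose_split k, add_mul, Finset.sum_mul]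
      _ = (∑ k ∈ range p, (m.choose k : ℤ) * 8^k)
          + ∑ k ∈ range p, ∑ i ∈ range k, ((m*p).choose (i+1) : ℤ) * (m.choose (k-(i+1)) : ℤ) * 8^k :=
          Finset.sum_add_distrib
      _ = 9^m + (p:ℤ) * WZ := by
          rw [hbin9, hWZ, Finset.mul_sum]
          congr 1
          apply Finset.sum_congr rfl
          intro k hk
          simp only [mem_range] at hk
          rw [Finset.mul_sum]
          apply Finset.sum_congr rfl
          intro i hi
          simp only [mem_range] at hi
          rw [show (m*p).choose (i+1) = p * B (i+1) from hBmul (i+1) (by omega) (by omega)]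
          push_cast
          ring
  have hWmod := W_mod p m hp hp3 hm B hB u v hu hv
  have hW3 : 3 * WZ ≡ -2*u - v [ZMOD (p:ℤ)] := by
    have hWF : ((3 * WZ : ℤ) : ZMod p) = ((-2*u - v : ℤ) : ZMod p) := by
      rw [hWZ]
      push_cast
      linear_combination hWmod
    have := (ZMod.intCast_eq_intCast_iff _ _ p).mp hWF
    exact_mod_cast this
  have hyp : 3 * y ≡ 1 [ZMOD (p:ℤ)] := Int.ModEq.of_dvd ⟨(p:ℤ), by ring⟩ hy
  have hWy : WZ ≡ y * (-2*u - v) [ZMOD (p:ℤ)] := by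
    calc WZ = 1 * WZ := by ring
      _ ≡ (3*y) * WZ [ZMOD (p:ℤ)] := (hyp.mul_right WZ).symm
      _ = y * (3 * WZ) := by ring
      _ ≡ y * (-2*u - v) [ZMOD (p:ℤ)] := hW3.mul_left y
  have hlift : (p:ℤ) * WZ ≡ (p:ℤ) * (y * (-2*u - v)) [ZMOD (p:ℤ)^2] := by
    have := hWy.mul_left' (c := (p:ℤ))
    rwa [show (p:ℤ)*(p:ℤ) = (p:ℤ)^2 by ring] at this
  have hcast1 : (∑ k ∈ range p, ((2*k).choose k : ℤ)*(-2)^k : ℤ) ≡ 9^m + (p:ℤ)*WZ [ZMOD (p:ℤ)^2] := by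
    have hz : ((∑ k ∈ range p, ((2*k).choose k : ℤ)*(-2)^k : ℤ) : ZMod (p^2)) = ((9^m + (p:ℤ)*WZ : ℤ) : ZMod (p^2)) := by
      push_cast
      rw [Finset.sum_congr rfl (fun k hk => key1 p m k hp hp3 hm (mem_range.mp hk))]
      have hc := congrArg (fun z : ℤ => (z : ZMod (p^2))) hsplitZ
      push_cast at hc
      linear_combination hc
    have := (ZMod.intCast_eq_intCast_iff _ _ _).mp hz
    rwa [show ((p^2:ℕ):ℤ) = (p:ℤ)^2 by push_cast; ring] at this
  have h9m : (9:ℤ)^m = 3^(p-1) := by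
    rw [show (9:ℤ) = 3^2 by norm_num, ← pow_mul]
    congr 1
    omega
  have h3f : (3:ℤ)^(p-1) ≡ 1 + (p:ℤ)*v*y [ZMOD (p:ℤ)^2] := by
    have hstep : (3:ℤ)^(p-1) * (3*y) = 3*y + (p:ℤ)*v*y := by
      have h3p : (3:ℤ)^(p-1) * 3 = 3^p := by
        rw [← pow_succ]
        congr 1
        omega
      calc (3:ℤ)^(p-1) * (3*y) = ((3:ℤ)^(p-1) * 3) * y := by ring
        _ = (3:ℤ)^p * y := by rw [h3p]
        _ = (3 + (p:ℤ)*v) * y := by rw [show (3:ℤ)^p = 3 + (p:ℤ)*v by linarith [hv]]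
        _ = 3*y + (p:ℤ)*v*y := by ring
    calc (3:ℤ)^(p-1) = (3:ℤ)^(p-1) * 1 := by ring
      _ ≡ (3:ℤ)^(p-1) * (3*y) [ZMOD (p:ℤ)^2] := (hy.mul_left _).symm
      _ = 3*y + (p:ℤ)*v*y := hstep
      _ ≡ 1 + (p:ℤ)*v*y [ZMOD (p:ℤ)^2] := hy.add_right _
  have hRHS : (1 : ℤ) - 4*y*(2^(p-1)-1) = 1 - 2*(p:ℤ)*u*y := by
    have h2p : (2:ℤ)^p = 2^(p-1)*2 := by
      rw [← pow_succ]; congr 1; omega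
    rw [h2p] at hu
    linear_combination -2*y*hu
  calc ∑ k ∈ range p, ((2 * k).choose k : ℤ) * (-2 : ℤ) ^ k
      ≡ 9^m + (p:ℤ)*WZ [ZMOD (p:ℤ)^2] := hcast1
    _ = 3^(p-1) + (p:ℤ)*WZ := by rw [h9m]
    _ ≡ (1 + (p:ℤ)*v*y) + (p:ℤ)*(y*(-2*u-v)) [ZMOD (p:ℤ)^2] := Int.ModEq.add h3f hlift
    _ = 1 - 2*(p:ℤ)*u*y := by ring
    _ = 1 - 4*y*(2^(p-1)-1) := hRHS.symm
end

section
/- For every nonnegative integer m and every rational (or real) x not equal to 0, -1, -2, …, -m, the identity ∑_{k=0}^{m} C(m,k) C(m+k,k) (-1)^{m-k} / (x+k) = (1/x) ∏_{k=1}^{m} (x-k)/(x+k) holds. -/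
open Finset
open Polynomial

-- coefficient
noncomputable def pfc (m k : ℕ) : ℚ :=
  (m.choose k : ℚ) * ((m + k).choose k : ℚ) * (-1 : ℚ) ^ (m - k)

lemma fact_prod_Icc (i m : ℕ) :
    (i.factorial : ℚ) * ∏ j ∈ Icc 1 m, ((i : ℚ) + j) = ((i + m).factorial : ℚ) := by
  induction m with
  | zero => simp
  | succ n ih =>
      rw [Finset.prod_Icc_succ_top (Nat.one_le_iff_ne_zero.mpr (Nat.succ_ne_zero n)), ← mul_assoc, ih]
      push_cast [Nat.factorial_succ, ← Nat.add_assoc]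
      ring

lemma prod_range_sub (i : ℕ) : ∏ j ∈ range i, ((i : ℚ) - j) = i.factorial := by
  induction i with
  | zero => simp
  | succ n ih =>
      rw [Finset.prod_range_succ']
      have : ∀ x : ℕ, ((n + 1 : ℕ) : ℚ) - (x + 1 : ℕ) = (n : ℚ) - x := by
        intro x; push_cast; ring
      simp only [this, ih]
      push_cast [Nat.factorial_succ]
      ring

lemma prod_Icc_sub (i m : ℕ) (h : i ≤ m) :
    ∏ j ∈ Icc (i + 1) m, ((j : ℚ) - i) = (m - i).factorial := by
  have hmap : Icc (i + 1) m = Finset.map (addLeftEmbedding i) (Icc 1 (m - i)) := by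
    rw [Finset.map_add_left_Icc]
    congr 1 <;> omega
  rw [hmap, Finset.prod_map]
  have : ∀ j ∈ Icc 1 (m - i), ((addLeftEmbedding i j : ℕ) : ℚ) - i = (j : ℚ) := by
    intro j _; simp [addLeftEmbedding]
  rw [Finset.prod_congr rfl this]
  rw [← Finset.Ico_add_one_right_eq_Icc, ← Finset.prod_natCast, Finset.prod_Ico_id_eq_factorial]

lemma erase_split (m i : ℕ) (h : i ≤ m) :
    (range (m + 1)).erase i = range i ∪ Icc (i + 1) m := by
  ext j
  simp only [mem_erase, mem_range, mem_union, mem_Icc]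
  omega

lemma eval_at_node (m i : ℕ) (h : i ≤ m) :
    ∑ k ∈ range (m + 1), pfc m k * ∏ j ∈ (range (m + 1)).erase k, (-(i : ℚ) + j) =
      ∏ j ∈ Icc 1 m, (-(i : ℚ) - j) := by
  have hi : i ∈ range (m + 1) := mem_range.mpr (Nat.lt_succ_of_le h)
  rw [Finset.sum_eq_single_of_mem i hi]
  · -- main term
    have hsplit := erase_split m i h
    have hdisj : Disjoint (range i) (Icc (i + 1) m) := by
      rw [Finset.disjoint_left]; intro a ha hb
      simp only [mem_range] at ha; simp only [mem_Icc] at hb; omega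
    rw [hsplit, Finset.prod_union hdisj]
    have h1 : ∏ j ∈ range i, (-(i : ℚ) + j) = (-1 : ℚ) ^ i * i.factorial := by
      have : ∀ j ∈ range i, (-(i : ℚ) + j) = (-1) * ((i : ℚ) - j) := by
        intro j _; ring
      rw [Finset.prod_congr rfl this, Finset.prod_mul_distrib, Finset.prod_const, card_range,
        prod_range_sub]
    have h2 : ∏ j ∈ Icc (i + 1) m, (-(i : ℚ) + j) = ((m - i).factorial : ℚ) := by
      have : ∀ j ∈ Icc (i + 1) m, (-(i : ℚ) + j) = ((j : ℚ) - i) := by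
        intro j _; ring
      rw [Finset.prod_congr rfl this, prod_Icc_sub i m h]
    have h3 : ∏ j ∈ Icc 1 m, (-(i : ℚ) - j) = (-1 : ℚ) ^ m * ∏ j ∈ Icc 1 m, ((i : ℚ) + j) := by
      have : ∀ j ∈ Icc 1 m, (-(i : ℚ) - j) = (-1) * ((i : ℚ) + j) := by
        intro j _; ring
      rw [Finset.prod_congr rfl this, Finset.prod_mul_distrib, Finset.prod_const, Nat.card_Icc]
      simp
    rw [h1, h2, h3]
    have hfne : (i.factorial : ℚ) ≠ 0 := Nat.cast_ne_zero.mpr i.factorial_ne_zero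
    apply mul_right_cancel₀ hfne
    have hrhs : (-1 : ℚ) ^ m * (∏ j ∈ Icc 1 m, ((i : ℚ) + j)) * i.factorial =
        (-1 : ℚ) ^ m * ((i + m).factorial : ℚ) := by
      rw [mul_assoc, mul_comm (∏ j ∈ Icc 1 m, ((i : ℚ) + j)) _, fact_prod_Icc]
    rw [hrhs, pfc]
    have hsign : (-1 : ℚ) ^ (m - i) * (-1 : ℚ) ^ i = (-1 : ℚ) ^ m := by
      rw [← pow_add]; congr 1; omega
    have hnat : m.choose i * ((m + i).choose i) * i.factorial * (m - i).factorial * i.factorial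
        = (i + m).factorial := by
      have e1 : m.choose i * i.factorial * (m - i).factorial = m.factorial :=
        Nat.choose_mul_factorial_mul_factorial h
      have e2 : (m + i).choose i * m.factorial * i.factorial = (m + i).factorial :=
        Nat.add_choose_mul_factorial_mul_factorial m i
      calc m.choose i * ((m + i).choose i) * i.factorial * (m - i).factorial * i.factorial
          = (m + i).choose i * (m.choose i * i.factorial * (m - i).factorial) * i.factorial := by ring
        _ = (m + i).choose i * m.factorial * i.factorial := by rw [e1]
        _ = (i + m).factorial := by rw [e2, Nat.add_comm]
    calc (m.choose i : ℚ) * ((m + i).choose i : ℚ) * (-1 : ℚ) ^ (m - i) *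
          ((-1 : ℚ) ^ i * (i.factorial : ℚ) * ((m - i).factorial : ℚ)) * (i.factorial : ℚ)
        = ((-1 : ℚ) ^ (m - i) * (-1 : ℚ) ^ i) *
          ((m.choose i : ℚ) * ((m + i).choose i : ℚ) * (i.factorial : ℚ) *
            ((m - i).factorial : ℚ) * (i.factorial : ℚ)) := by ring
      _ = (-1 : ℚ) ^ m * ((i + m).factorial : ℚ) := by
          rw [hsign]; congr 1; push_cast [← hnat]; ring
  · -- other terms vanish
    intro k hk hki
    have hik : i ∈ (range (m + 1)).erase k := Finset.mem_erase.mpr ⟨Ne.symm hki, hi⟩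
    rw [Finset.prod_eq_zero hik (by simp), mul_zero]

lemma key (m : ℕ) (x : ℚ) :
    ∑ k ∈ range (m + 1), pfc m k * ∏ j ∈ (range (m + 1)).erase k, (x + j) =
      ∏ j ∈ Icc 1 m, (x - j) := by
  have hP : ((∑ k ∈ range (m + 1),
        C (pfc m k) * ∏ j ∈ (range (m + 1)).erase k, (X + C (j : ℚ))) -
      ∏ j ∈ Icc 1 m, (X - C (j : ℚ))) = 0 := by
    apply Polynomial.eq_zero_of_natDegree_lt_card_of_eval_eq_zero' _
      ((range (m + 1)).image (fun k : ℕ => -(k : ℚ)))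
    · intro y hy
      simp only [mem_image, mem_range] at hy
      obtain ⟨i, hi, rfl⟩ := hy
      have hev := eval_at_node m i (Nat.lt_succ_iff.mp hi)
      simp only [eval_sub, eval_finset_sum, eval_mul, eval_prod, eval_add, eval_X, eval_C,
        eval_sub, sub_eq_zero]
      exact hev
    · have hcard : #((range (m + 1)).image (fun k : ℕ => -(k : ℚ))) = m + 1 := by
        rw [Finset.card_image_of_injective _
          (fun a b hab => Nat.cast_injective (neg_injective hab)), card_range]
      rw [hcard]
      have hd1 : (∑ k ∈ range (m + 1),
          C (pfc m k) * ∏ j ∈ (range (m + 1)).erase k, (X + C (j : ℚ))).natDegree ≤ m := by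
        apply Polynomial.natDegree_sum_le_of_forall_le
        intro k hk
        refine (Polynomial.natDegree_mul_le).trans ?_
        rw [Polynomial.natDegree_C, zero_add]
        refine (Polynomial.natDegree_prod_le _ _).trans ?_
        calc ∑ j ∈ (range (m + 1)).erase k, (X + C (j : ℚ)).natDegree
            = ∑ j ∈ (range (m + 1)).erase k, 1 := by
              refine Finset.sum_congr rfl fun j _ => ?_
              exact Polynomial.natDegree_X_add_C _
          _ ≤ m := by
              rw [Finset.sum_const, smul_eq_mul, mul_one,
                Finset.card_erase_of_mem hk, card_range]
              omega
      have hd2 : (∏ j ∈ Icc 1 m, (X - C (j : ℚ))).natDegree ≤ m := by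
        refine le_trans (Polynomial.natDegree_prod_le _ _) ?_
        calc ∑ j ∈ Icc 1 m, (X - C (j : ℚ)).natDegree
            = ∑ j ∈ Icc 1 m, 1 := by
              refine Finset.sum_congr rfl fun j _ => ?_
              exact Polynomial.natDegree_X_sub_C _
          _ ≤ m := by rw [Finset.sum_const, smul_eq_mul, mul_one, Nat.card_Icc]; omega
      exact lt_of_le_of_lt (Polynomial.natDegree_sub_le _ _)
        (Nat.lt_succ_of_le (max_le hd1 hd2))
  have := congrArg (eval x) hP
  simpa [eval_sub, eval_finset_sum, eval_mul, eval_prod, eval_add, eval_X, eval_C,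
    sub_eq_zero] using this

theorem partial_fraction_identity (m : ℕ) (x : ℚ)
    (hx : ∀ k : ℕ, k ≤ m → x + k ≠ 0) :
    ∑ k ∈ range (m + 1),
        (m.choose k : ℚ) * ((m + k).choose k : ℚ) * (-1 : ℚ) ^ (m - k) / (x + k) =
      (1 / x) * ∏ k ∈ Icc 1 m, (x - k) / (x + k) := by
  have hne : ∀ k ∈ range (m + 1), x + (k : ℚ) ≠ 0 := fun k hk =>
    hx k (Nat.lt_succ_iff.mp (mem_range.mp hk))
  have hD : (∏ j ∈ range (m + 1), (x + (j : ℚ))) ≠ 0 :=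
    Finset.prod_ne_zero_iff.mpr hne
  -- LHS: common denominator
  have hL : ∑ k ∈ range (m + 1),
      (m.choose k : ℚ) * ((m + k).choose k : ℚ) * (-1 : ℚ) ^ (m - k) / (x + k) =
      (∑ k ∈ range (m + 1), pfc m k * ∏ j ∈ (range (m + 1)).erase k, (x + j)) /
        ∏ j ∈ range (m + 1), (x + (j : ℚ)) := by
    rw [Finset.sum_div]
    refine Finset.sum_congr rfl fun k hk => ?_
    rw [← Finset.mul_prod_erase _ _ hk, pfc]
    have hker : (∏ j ∈ (range (m + 1)).erase k, (x + (j : ℚ))) ≠ 0 :=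
      Finset.prod_ne_zero_iff.mpr fun j hj => hne j (Finset.mem_of_mem_erase hj)
    rw [div_eq_div_iff (hne k hk) (mul_ne_zero (hne k hk) hker)]
    ring
  -- RHS: common denominator
  have hsplit : ∏ j ∈ range (m + 1), (x + (j : ℚ)) = x * ∏ j ∈ Icc 1 m, (x + (j : ℚ)) := by
    have h0 : range (m + 1) = insert 0 (Icc 1 m) := by
      ext j; simp only [mem_range, mem_insert, mem_Icc]; omega
    rw [h0, Finset.prod_insert (by simp)]
    norm_num
  have hIcc : (∏ j ∈ Icc 1 m, (x + (j : ℚ))) ≠ 0 :=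
    Finset.prod_ne_zero_iff.mpr fun j hj => hne j (by
      simp only [mem_Icc] at hj; exact mem_range.mpr (by omega))
  have hx0 : x ≠ 0 := by simpa using hx 0 (Nat.zero_le m)
  have hR : (1 / x) * ∏ k ∈ Icc 1 m, (x - k) / (x + k) =
      (∏ j ∈ Icc 1 m, (x - (j : ℚ))) / ∏ j ∈ range (m + 1), (x + (j : ℚ)) := by
    rw [Finset.prod_div_distrib, hsplit]
    field_simp
  rw [hL, hR, key]
end

section
/- For all nonnegative integers m, k and positive integer p with m ≤ p-1 and k ≤ m, ∑_{ℓ=m}^{p-1} C(ℓ, m+k) C(ℓ+m+k, m+k) = C(2m+2k, m+k) C(p+m+k, 2m+2k+1). -/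
open Finset

lemma aux_key (q n : ℕ) : q.choose n * (q + n).choose n = (2 * n).choose n * (q + n).choose (2 * n) := by
  rcases le_or_gt n q with h | h
  · have h2 : 2 * n ≤ q + n := by omega
    have := Nat.choose_mul (n := q + n) (k := 2 * n) (s := n) (by omega)
    have e1 : q + n - n = q := by omega
    have e2 : 2 * n - n = n := by omega
    rw [e1, e2] at this
    rw [Nat.mul_comm ((2*n).choose n), this]
    ring
  · have hz : (q + n).choose (2 * n) = 0 := Nat.choose_eq_zero_of_lt (by omega)
    rw [Nat.choose_eq_zero_of_lt h, hz, Nat.zero_mul, Nat.mul_zero]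

lemma aux_sum (n : ℕ) : ∀ q : ℕ, ∑ ℓ ∈ range q, ℓ.choose n * (ℓ + n).choose n =
    (2 * n).choose n * (q + n).choose (2 * n + 1) := by
  intro q
  induction q with
  | zero => simp [Nat.choose_eq_zero_of_lt (by omega : n < 2 * n + 1)]
  | succ q ih =>
    rw [Finset.sum_range_succ, ih]
    have : (q + 1 + n).choose (2 * n + 1) = (q + n).choose (2 * n + 1) + (q + n).choose (2 * n) := by
      have : q + 1 + n = (q + n) + 1 := by omega
      rw [this, Nat.choose_succ_succ']
      exact Nat.add_comm _ _
    rw [this, Nat.mul_add, aux_key]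

theorem binom_sum_identity (p m k : ℕ) (hp : 0 < p) (hm : m ≤ p - 1) (hk : k ≤ m) :
    ∑ ℓ ∈ Icc m (p - 1), ℓ.choose (m + k) * (ℓ + m + k).choose (m + k) =
      (2 * m + 2 * k).choose (m + k) * (p + m + k).choose (2 * m + 2 * k + 1) := by
  have h1 : Icc m (p - 1) = Ico m p := by
    ext x; simp [Nat.lt_iff_le_pred hp]
  have h2 : ∑ ℓ ∈ range p, ℓ.choose (m + k) * (ℓ + (m + k)).choose (m + k) =
      ∑ ℓ ∈ Ico m p, ℓ.choose (m + k) * (ℓ + (m + k)).choose (m + k) := by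
    rw [Finset.range_eq_Ico, ← Finset.sum_Ico_consecutive _ (Nat.zero_le m) (by omega : m ≤ p)]
    have : ∑ ℓ ∈ Ico 0 m, ℓ.choose (m + k) * (ℓ + (m + k)).choose (m + k) = 0 := by
      apply Finset.sum_eq_zero
      intro x hx
      simp only [Finset.mem_Ico] at hx
      rw [Nat.choose_eq_zero_of_lt (by omega), Nat.zero_mul]
    rw [this, Nat.zero_add]
  have := aux_sum (m + k) p
  rw [h2] at this
  have e : 2 * (m + k) = 2 * m + 2 * k := by ring
  rw [e] at this
  rw [h1]
  calc ∑ ℓ ∈ Ico m p, ℓ.choose (m + k) * (ℓ + m + k).choose (m + k)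
      = ∑ ℓ ∈ Ico m p, ℓ.choose (m + k) * (ℓ + (m + k)).choose (m + k) := by
        apply Finset.sum_congr rfl; intro x _; rw [← Nat.add_assoc]
    _ = (2 * m + 2 * k).choose (m + k) * (p + m + k).choose (2 * m + 2 * k + 1) := by
        rw [show p + m + k = p + (m + k) from by omega, ← this]
end

section
/- Let p > 3 be a prime and let m, k be nonnegative integers with m + k ≤ p - 1. Then C(2m+2k, m+k) · C(p+m+k, 2m+2k+1) ≡ (-1)^{m+k} · p / (2m+2k+1) (mod p^2), where division by 2m+2k+1 is interpreted via its inverse modulo p^2 when p does not divide 2m+2k+1, and when p divides 2m+2k+1 the statement is C(2m+2k,m+k)·C(p+m+k,2m+2k+1)·(2m+2k+1) ≡ (-1)^{m+k} p (mod p^3). -/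
-- Key congruence: (n!)^2 * (C(p+n,n) * C(p-1,n)) ≡ (-1)^n * (n!)^2 [ZMOD p^2]
lemma aux_cong (p : ℕ) (hp : 0 < p) : ∀ n : ℕ, n ≤ p - 1 →
    ((n.factorial : ℤ))^2 * (((p+n).choose n : ℤ) * ((p-1).choose n : ℤ)) ≡
      (-1 : ℤ)^n * ((n.factorial : ℤ))^2 [ZMOD (p : ℤ)^2] := by
  intro n
  induction n with
  | zero => intro _; simp
  | succ n ih =>
    intro hn
    have hn' : n ≤ p - 1 := by omega
    have IH := ih hn'
    -- recurrences
    have hA : (p + n + 1) * (p + n).choose n = (p + n + 1).choose (n + 1) * (n + 1) := by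
      simpa using Nat.add_one_mul_choose_eq (p + n) n
    have hB : (p - 1).choose (n + 1) * (n + 1) = (p - 1).choose n * (p - 1 - n) :=
      Nat.choose_succ_right_eq (p - 1) (n + 1 - 1)
    have hcast : ((p - 1 - n : ℕ) : ℤ) = (p : ℤ) - 1 - n := by
      have : n + 1 ≤ p - 1 := hn
      push_cast [Nat.cast_sub (by omega : n ≤ p - 1), Nat.cast_sub (by omega : 1 ≤ p)]
      ring
    -- key algebraic identity over ℤ
    have key : (((n+1).factorial : ℤ))^2 * (((p+n+1).choose (n+1) : ℤ) * ((p-1).choose (n+1) : ℤ))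
        = ((n.factorial : ℤ))^2 * (((p+n).choose n : ℤ) * ((p-1).choose n : ℤ)) *
          (((p : ℤ) + n + 1) * ((p : ℤ) - 1 - n)) := by
      have hA' : ((p : ℤ) + n + 1) * ((p + n).choose n : ℤ)
          = ((p + n + 1).choose (n + 1) : ℤ) * (n + 1) := by exact_mod_cast congrArg (Nat.cast : ℕ → ℤ) hA
      have hB' : ((p - 1).choose (n + 1) : ℤ) * (n + 1)
          = ((p - 1).choose n : ℤ) * ((p : ℤ) - 1 - n) := by
        have := congrArg (Nat.cast : ℕ → ℤ) hB
        push_cast at this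
        rw [hcast] at this
        exact_mod_cast this
      have hfact : (((n+1).factorial : ℤ)) = ((n + 1 : ℤ)) * (n.factorial : ℤ) := by
        push_cast [Nat.factorial_succ]; ring
      rw [hfact]
      linear_combination ((n.factorial : ℤ)^2) *
        ((((p+n+1).choose (n+1) : ℤ) * ((n:ℤ)+1)) * hB' -
         (((p-1).choose n : ℤ) * ((p:ℤ)-1-(n:ℤ))) * hA')
    simp only [show p + (n+1) = p + n + 1 from by omega]
    rw [key]
    -- (p+n+1)(p-1-n) = p^2 - (n+1)^2 ≡ -(n+1)^2
    have hsq : ((p : ℤ) + n + 1) * ((p : ℤ) - 1 - n) ≡ -((n : ℤ)+1)^2 [ZMOD (p : ℤ)^2] := by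
      have h0 : ((p : ℤ)^2) ≡ 0 [ZMOD (p : ℤ)^2] := (Int.modEq_zero_iff_dvd).mpr dvd_rfl
      have := h0.sub_right (((n : ℤ)+1)^2)
      calc ((p : ℤ) + n + 1) * ((p : ℤ) - 1 - n) = (p : ℤ)^2 - ((n : ℤ)+1)^2 := by ring
        _ ≡ 0 - ((n : ℤ)+1)^2 [ZMOD (p : ℤ)^2] := this
        _ = -((n : ℤ)+1)^2 := by ring
    calc ((n.factorial : ℤ))^2 * (((p+n).choose n : ℤ) * ((p-1).choose n : ℤ)) *
          (((p : ℤ) + n + 1) * ((p : ℤ) - 1 - n))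
        ≡ ((-1:ℤ)^n * ((n.factorial : ℤ))^2) * (-((n : ℤ)+1)^2) [ZMOD (p : ℤ)^2] := IH.mul hsq
      _ = (-1:ℤ)^(n+1) * (((n+1).factorial : ℤ))^2 := by
          push_cast [Nat.factorial_succ]; ring

-- the exact identity
lemma aux_id (p n : ℕ) (hp : 0 < p) (hn : n ≤ p - 1) :
    (2*n).choose n * ((p + n).choose (2*n+1)) * (2*n+1) =
      p * ((p + n).choose n * (p-1).choose n) := by
  have h1 : n + 1 ≤ p := by omega
  have key : ∀ a b : ℕ, a = b → a * (n.factorial * n.factorial * (p - 1 - n).factorial)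
      = b * (n.factorial * n.factorial * (p - 1 - n).factorial) := by intro a b hab; rw [hab]
  have hpos : 0 < n.factorial * n.factorial * (p - 1 - n).factorial :=
    Nat.mul_pos (Nat.mul_pos n.factorial_pos n.factorial_pos) (p-1-n).factorial_pos
  apply Nat.eq_of_mul_eq_mul_right hpos
  have e1 : (2*n).choose n * n.factorial * n.factorial = (2*n).factorial := by
    have := Nat.choose_mul_factorial_mul_factorial (show n ≤ 2*n by omega)
    simpa [show 2*n - n = n by omega] using this
  have e2 : (p + n).choose (2*n+1) * (2*n+1).factorial * (p - 1 - n).factorial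
      = (p + n).factorial := by
    have := Nat.choose_mul_factorial_mul_factorial (show 2*n+1 ≤ p + n by omega)
    simpa [show p + n - (2*n+1) = p - 1 - n by omega] using this
  have e3 : (p-1).choose n * n.factorial * (p - 1 - n).factorial = (p-1).factorial :=
    Nat.choose_mul_factorial_mul_factorial hn
  have e4 : (p + n).choose n * n.factorial * p.factorial = (p + n).factorial := by
    have := Nat.choose_mul_factorial_mul_factorial (show n ≤ p + n by omega)
    simpa [show p + n - n = p by omega] using this
  have e5 : (2*n+1) * (2*n).factorial = (2*n+1).factorial := (Nat.factorial_succ (2*n)).symm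
  have e6 : p * (p-1).factorial = p.factorial := by
    have : p = p - 1 + 1 := by omega
    rw [this, Nat.factorial_succ]; congr 1 <;> omega
  calc (2*n).choose n * ((p + n).choose (2*n+1)) * (2*n+1) *
        (n.factorial * n.factorial * (p - 1 - n).factorial)
      = ((p + n).choose (2*n+1)) * ((2*n+1) * ((2*n).choose n * n.factorial * n.factorial))
        * (p - 1 - n).factorial := by ring
    _ = ((p + n).choose (2*n+1)) * (2*n+1).factorial * (p - 1 - n).factorial := by
        rw [e1, e5]
    _ = (p + n).factorial := e2
    _ = (p + n).choose n * n.factorial * p.factorial := e4.symm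
    _ = (p + n).choose n * n.factorial * (p * (p-1).factorial) := by rw [e6]
    _ = (p + n).choose n * n.factorial * (p * ((p-1).choose n * n.factorial * (p-1-n).factorial)) := by
        rw [e3]
    _ = p * ((p + n).choose n * (p-1).choose n) *
        (n.factorial * n.factorial * (p - 1 - n).factorial) := by ring

theorem binom_product_congruence (p : ℕ) (hp : p.Prime) (hp3 : 3 < p)
    (m k : ℕ) (h : m + k ≤ p - 1) :
    (∀ y : ℤ, ¬ (p : ℤ) ∣ (2 * m + 2 * k + 1) →
        (2 * m + 2 * k + 1 : ℤ) * y ≡ 1 [ZMOD (p : ℤ) ^ 2] →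
        ((2 * m + 2 * k).choose (m + k) : ℤ) *
            ((p + m + k).choose (2 * m + 2 * k + 1) : ℤ) ≡
          (-1 : ℤ) ^ (m + k) * p * y [ZMOD (p : ℤ) ^ 2]) ∧
    ((p : ℤ) ∣ (2 * m + 2 * k + 1) →
        ((2 * m + 2 * k).choose (m + k) : ℤ) *
            ((p + m + k).choose (2 * m + 2 * k + 1) : ℤ) * (2 * m + 2 * k + 1) ≡
          (-1 : ℤ) ^ (m + k) * p [ZMOD (p : ℤ) ^ 3]) := by
  have hp0 : 0 < p := by omega
  have hn := h
  -- abbreviations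
  have hid := aux_id p (m + k) hp0 hn
  have hc := aux_cong p hp0 (m + k) hn
  -- (m+k)! is coprime to p
  have hcop : Nat.Coprime (((m+k).factorial)^2) (p^2) := by
    have h1 : ¬ p ∣ (m+k).factorial := by
      intro hd
      have := (Nat.Prime.dvd_factorial hp).mp hd
      omega
    exact ((hp.coprime_iff_not_dvd.mpr h1).symm).pow 2 2
  have hgcd : Int.gcd ((((m+k).factorial : ℤ))^2) ((p : ℤ)^2) = 1 := by
    have : ((((m+k).factorial)^2 : ℕ) : ℤ) = (((m+k).factorial : ℤ))^2 := by push_cast; ring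
    rw [← this, show ((p:ℤ))^2 = ((p^2 : ℕ) : ℤ) by push_cast; ring,
      Int.gcd_natCast_natCast]
    exact hcop
  -- cancel (n!)^2
  have habs : (((p + (m+k)).choose (m+k) : ℤ) * ((p-1).choose (m+k) : ℤ)) ≡
      (-1 : ℤ)^(m+k) [ZMOD (p : ℤ)^2] := by
    have hm2 : (0 : ℤ) < (p : ℤ)^2 := by positivity
    have hc' : (((m+k).factorial : ℤ))^2 * (((p + (m+k)).choose (m+k) : ℤ) * ((p-1).choose (m+k) : ℤ))
        ≡ (((m+k).factorial : ℤ))^2 * ((-1 : ℤ)^(m+k)) [ZMOD (p : ℤ)^2] := by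
      calc (((m+k).factorial : ℤ))^2 * (((p + (m+k)).choose (m+k) : ℤ) * ((p-1).choose (m+k) : ℤ))
          ≡ (-1 : ℤ)^(m+k) * (((m+k).factorial : ℤ))^2 [ZMOD (p : ℤ)^2] := hc
        _ = (((m+k).factorial : ℤ))^2 * ((-1 : ℤ)^(m+k)) := by ring
    have := Int.ModEq.cancel_left_div_gcd hm2 hc'
    rwa [Int.gcd_comm, hgcd, Nat.cast_one, Int.ediv_one] at this
  -- main congruence mod p^3
  have main3 : ((2*(m+k)).choose (m+k) : ℤ) * ((p + (m+k)).choose (2*(m+k)+1) : ℤ) *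
      ((2*(m+k) : ℕ) + 1 : ℤ) ≡ (-1 : ℤ)^(m+k) * p [ZMOD (p : ℤ)^3] := by
    have hid' : ((2*(m+k)).choose (m+k) : ℤ) * ((p + (m+k)).choose (2*(m+k)+1) : ℤ) *
        ((2*(m+k) : ℕ) + 1 : ℤ)
        = (p : ℤ) * (((p + (m+k)).choose (m+k) : ℤ) * ((p-1).choose (m+k) : ℤ)) := by
      exact_mod_cast congrArg (Nat.cast : ℕ → ℤ) hid
    rw [hid']
    have := habs.mul_left' (c := (p : ℤ))
    rw [show (p:ℤ) * (p:ℤ)^2 = (p:ℤ)^3 by ring] at this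
    calc (p : ℤ) * (((p + (m+k)).choose (m+k) : ℤ) * ((p-1).choose (m+k) : ℤ))
        ≡ (p : ℤ) * ((-1 : ℤ)^(m+k)) [ZMOD (p : ℤ)^3] := this
      _ = (-1 : ℤ)^(m+k) * p := by ring
  -- rewrite the goal in terms of m+k
  have e1 : 2*m+2*k = 2*(m+k) := by ring
  have e2 : p+m+k = p+(m+k) := by omega
  have e3 : (2*(m:ℤ)+2*(k:ℤ)+1) = ((2*(m+k) : ℕ) + 1 : ℤ) := by push_cast; ring
  simp only [e1, e2, e3]
  constructor
  · intro y _ hy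
    have h2 : ((2*(m+k)).choose (m+k) : ℤ) * ((p + (m+k)).choose (2*(m+k)+1) : ℤ) *
        ((2*(m+k) : ℕ) + 1 : ℤ) ≡ (-1 : ℤ)^(m+k) * p [ZMOD (p : ℤ)^2] :=
      main3.of_dvd (by exact pow_dvd_pow _ (by omega))
    set C := ((2*(m+k)).choose (m+k) : ℤ) * ((p + (m+k)).choose (2*(m+k)+1) : ℤ) with hC
    calc C = C * 1 := by ring
      _ ≡ C * (((2*(m+k) : ℕ) + 1 : ℤ) * y) [ZMOD (p : ℤ)^2] := (hy.mul_left C).symm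
      _ = (C * ((2*(m+k) : ℕ) + 1 : ℤ)) * y := by ring
      _ ≡ ((-1 : ℤ)^(m+k) * p) * y [ZMOD (p : ℤ)^2] := h2.mul_right y
      _ = (-1 : ℤ)^(m+k) * p * y := by ring
  · intro _
    exact main3
end

section
/- Let p > 3 be a prime and x an integer. Then ∑_{k=0}^{p-1} A_k(x) ≡ ∑_{k=0}^{(p-1)/2} C(p+2k, 4k+1) · C(2k,k)^2 · x^k (mod p^2), where A_k(x) = ∑_{j=0}^{k} C(k,j)^2 C(k+j,j)^2 x^j. -/
open Finset Polynomial

lemma APvand (A B K : ℕ) :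
    (A + B).choose K = ∑ t ∈ range (K + 1), A.choose t * B.choose (K - t) := by
  rw [Nat.add_choose_eq, Finset.Nat.sum_antidiagonal_eq_sum_range_succ_mk]

lemma APinner2 (j a : ℕ) :
    ∑ i ∈ range (2*j+1), ((2*j).choose i)^2 * i.choose a
      = (2*j).choose a * (4*j - a).choose (2*j - a) := by
  by_cases ha : a ≤ 2*j
  · have h1 : ∑ i ∈ range (2*j+1), ((2*j).choose i)^2 * i.choose a
        = ∑ i ∈ Ico a (2*j+1), ((2*j).choose i)^2 * i.choose a := by
      refine (Finset.sum_subset ?_ ?_).symm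
      · intro i hi; simp only [mem_Ico] at hi; exact mem_range.2 hi.2
      · intro i hi hni
        simp only [mem_range] at hi
        simp only [mem_Ico, not_and, not_le] at hni
        have : i < a := by
          by_contra hc
          exact absurd hi (by simpa using hni (by omega))
        rw [Nat.choose_eq_zero_of_lt this, mul_zero]
    rw [h1, Finset.sum_Ico_eq_sum_range]
    have h2 : ∀ t ∈ range (2*j+1-a), ((2*j).choose (a+t))^2 * (a+t).choose a
        = (2*j).choose a * ((2*j-a).choose t * (2*j).choose ((2*j-a) - t)) := by
      intro t ht
      have htle : a + t ≤ 2*j := by simp only [mem_range] at ht; omega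
      have key : (2*j).choose (a+t) * (a+t).choose a
          = (2*j).choose a * (2*j-a).choose t := by
        have := Nat.choose_mul (n := 2*j) (Nat.le_add_right a t)
        simpa using this
      have hsymm : (2*j).choose (a+t) = (2*j).choose ((2*j-a) - t) := by
        have : (2*j) - (a+t) = (2*j-a) - t := by omega
        rw [← this, Nat.choose_symm htle]
      calc ((2*j).choose (a+t))^2 * (a+t).choose a
          = ((2*j).choose (a+t) * (a+t).choose a) * (2*j).choose (a+t) := by ring
        _ = ((2*j).choose a * (2*j-a).choose t) * (2*j).choose ((2*j-a) - t) := by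
            rw [key, hsymm]
        _ = (2*j).choose a * ((2*j-a).choose t * (2*j).choose ((2*j-a) - t)) := by ring
    rw [Finset.sum_congr rfl h2, ← Finset.mul_sum]
    have hrange : 2*j+1-a = (2*j-a)+1 := by omega
    rw [hrange, ← APvand (2*j-a) (2*j) (2*j-a)]
    congr 1
    congr 1
    omega
  · push_neg at ha
    rw [Nat.choose_eq_zero_of_lt ha, zero_mul]
    refine Finset.sum_eq_zero fun i hi => ?_
    simp only [mem_range] at hi
    rw [Nat.choose_eq_zero_of_lt (show i < a by omega), mul_zero]

lemma APinner (j m : ℕ) :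
    ∑ i ∈ range (2*j+1), ((2*j).choose i)^2 * (m + i).choose (4*j)
      = (m.choose (2*j))^2 := by
  have vand : ∀ i, (m + i).choose (4*j)
      = ∑ a ∈ range (4*j+1), i.choose a * m.choose (4*j - a) := by
    intro i
    rw [add_comm m i, APvand]
  calc ∑ i ∈ range (2*j+1), ((2*j).choose i)^2 * (m + i).choose (4*j)
      = ∑ i ∈ range (2*j+1), ∑ a ∈ range (4*j+1),
          ((2*j).choose i)^2 * i.choose a * m.choose (4*j - a) := by
        refine Finset.sum_congr rfl fun i _ => ?_
        rw [vand i, Finset.mul_sum]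
        exact Finset.sum_congr rfl fun a _ => by ring
    _ = ∑ a ∈ range (4*j+1), (∑ i ∈ range (2*j+1),
          ((2*j).choose i)^2 * i.choose a) * m.choose (4*j - a) := by
        rw [Finset.sum_comm]
        exact Finset.sum_congr rfl fun a _ => by rw [Finset.sum_mul]
    _ = ∑ a ∈ range (4*j+1), (2*j).choose a * (4*j-a).choose (2*j-a) * m.choose (4*j - a) := by
        refine Finset.sum_congr rfl fun a _ => ?_
        rw [APinner2]
    _ = ∑ a ∈ range (2*j+1), (2*j).choose a * (4*j-a).choose (2*j-a) * m.choose (4*j - a) := by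
        refine (Finset.sum_subset ?_ ?_).symm
        · intro a ha; simp only [mem_range] at ha ⊢; omega
        · intro a _ ha
          simp only [mem_range, not_lt] at ha
          rw [Nat.choose_eq_zero_of_lt (by omega), zero_mul, zero_mul]
    _ = ∑ a ∈ range (2*j+1), (2*j).choose a * (m.choose (2*j) * (m - 2*j).choose (2*j - a)) := by
        refine Finset.sum_congr rfl fun a ha => ?_
        simp only [mem_range] at ha
        have ha' : a ≤ 2*j := by omega
        have key : (4*j-a).choose (2*j-a) * m.choose (4*j - a)
            = m.choose (2*j) * (m - 2*j).choose (2*j - a) := by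
          have hsymm : (4*j-a).choose (2*j-a) = (4*j-a).choose (2*j) := by
            apply Nat.choose_symm_of_eq_add; omega
          rw [hsymm]
          rcases le_or_gt (4*j-a) m with h | h
          · have := Nat.choose_mul (n := m) (by omega : 2*j ≤ 4*j - a)
            have heq : 4*j - a - 2*j = 2*j - a := by omega
            rw [heq] at this
            rw [mul_comm ((4*j-a).choose (2*j)) (m.choose (4*j-a)), this]
          · rcases le_or_gt (2*j) m with h2 | h2
            · rw [Nat.choose_eq_zero_of_lt h, mul_zero,
                Nat.choose_eq_zero_of_lt (by omega : m - 2*j < 2*j - a), mul_zero]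
            · rw [Nat.choose_eq_zero_of_lt h, mul_zero,
                Nat.choose_eq_zero_of_lt h2, zero_mul]
        rw [mul_assoc, key]
    _ = m.choose (2*j) * ∑ a ∈ range (2*j+1), (2*j).choose a * (m - 2*j).choose (2*j - a) := by
        rw [Finset.mul_sum]
        exact Finset.sum_congr rfl fun a _ => by ring
    _ = (m.choose (2*j))^2 := by
        rw [← APvand (2*j) (m - 2*j) (2*j)]
        rcases le_or_gt (2*j) m with h | h
        · rw [Nat.add_sub_cancel' h, pow_two]
        · rw [Nat.choose_eq_zero_of_lt h, zero_mul, pow_two, zero_mul]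


lemma APsum (j n : ℕ) :
    ∑ k ∈ range n, ((k+j).choose (2*j))^2
      = ∑ i ∈ range (2*j+1), ((2*j).choose i)^2 * (n+j+i).choose (4*j+1) := by
  induction n with
  | zero =>
    rw [Finset.sum_range_zero]
    refine (Finset.sum_eq_zero fun i hi => ?_).symm
    simp only [mem_range] at hi
    rw [Nat.choose_eq_zero_of_lt (show 0+j+i < 4*j+1 by omega), mul_zero]
  | succ n ih =>
    rw [Finset.sum_range_succ, ih]
    refine Eq.symm ?_
    have pascal : ∀ i, (n+1+j+i).choose (4*j+1)
        = (n+j+i).choose (4*j) + (n+j+i).choose (4*j+1) := by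
      intro i
      have h1 : n+1+j+i = (n+j+i)+1 := by omega
      rw [h1, Nat.choose_succ_succ]
    calc ∑ i ∈ range (2*j+1), ((2*j).choose i)^2 * (n+1+j+i).choose (4*j+1)
        = ∑ i ∈ range (2*j+1), (((2*j).choose i)^2 * (n+j+i).choose (4*j)
            + ((2*j).choose i)^2 * (n+j+i).choose (4*j+1)) := by
          refine Finset.sum_congr rfl fun i _ => ?_
          rw [pascal i, mul_add]
      _ = (∑ i ∈ range (2*j+1), ((2*j).choose i)^2 * (n+j+i).choose (4*j))
            + ∑ i ∈ range (2*j+1), ((2*j).choose i)^2 * (n+j+i).choose (4*j+1) := by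
          rw [Finset.sum_add_distrib]
      _ = _ := by
          rw [APinner j (n+j), Nat.add_comm]


lemma APalt_step (n : ℕ) (f : ℕ → ℤ) :
    ∑ i ∈ range (n+2), (-1:ℤ)^i * ((n+1).choose i : ℤ) * f i
      = (∑ i ∈ range (n+1), (-1:ℤ)^i * (n.choose i : ℤ) * f i)
        - ∑ i ∈ range (n+1), (-1:ℤ)^i * (n.choose i : ℤ) * f (i+1) := by
  have e1 : ∑ i ∈ range (n+2), (-1:ℤ)^i * ((n+1).choose i : ℤ) * f i
      = (∑ t ∈ range (n+1), (-1:ℤ)^(t+1) * ((n+1).choose (t+1) : ℤ) * f (t+1))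
          + (-1:ℤ)^0 * ((n+1).choose 0 : ℤ) * f 0 := Finset.sum_range_succ' _ _
  have e2 : ∑ i ∈ range (n+2), (-1:ℤ)^i * (n.choose i : ℤ) * f i
      = (∑ t ∈ range (n+1), (-1:ℤ)^(t+1) * (n.choose (t+1) : ℤ) * f (t+1))
          + (-1:ℤ)^0 * (n.choose 0 : ℤ) * f 0 := Finset.sum_range_succ' _ _
  have e3 : ∑ i ∈ range (n+2), (-1:ℤ)^i * (n.choose i : ℤ) * f i
      = (∑ i ∈ range (n+1), (-1:ℤ)^i * (n.choose i : ℤ) * f i)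
          + (-1:ℤ)^(n+1) * (n.choose (n+1) : ℤ) * f (n+1) := Finset.sum_range_succ _ _
  have e4 : ∀ t, ((n+1).choose (t+1) : ℤ) = (n.choose t : ℤ) + (n.choose (t+1) : ℤ) := by
    intro t; rw [Nat.choose_succ_succ]; push_cast; ring
  rw [Nat.choose_succ_self, Nat.cast_zero] at e3
  have e5 : ∑ t ∈ range (n+1), (-1:ℤ)^(t+1) * ((n+1).choose (t+1) : ℤ) * f (t+1)
      = (∑ t ∈ range (n+1), (-1:ℤ)^(t+1) * (n.choose t : ℤ) * f (t+1))
        + ∑ t ∈ range (n+1), (-1:ℤ)^(t+1) * (n.choose (t+1) : ℤ) * f (t+1) := by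
    rw [← Finset.sum_add_distrib]
    refine Finset.sum_congr rfl fun t _ => ?_
    rw [e4]; ring
  have e6 : ∑ t ∈ range (n+1), (-1:ℤ)^(t+1) * (n.choose t : ℤ) * f (t+1)
      = - ∑ t ∈ range (n+1), (-1:ℤ)^t * (n.choose t : ℤ) * f (t+1) := by
    rw [← Finset.sum_neg_distrib]
    refine Finset.sum_congr rfl fun t _ => ?_
    ring
  rw [e1, e5, e6]
  have := e2.symm
  rw [e3] at this
  -- this : ∑ i ∈ range (n+1), ... * f i + 0 = ∑ t, (-1)^(t+1) C(n,t+1) f(t+1) + f 0 - like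
  simp only [mul_zero, zero_mul, add_zero, pow_zero, Nat.choose_zero_right, Nat.cast_one,
    one_mul] at this e1 ⊢
  linarith [this]

lemma APFD0 : ∀ (n : ℕ) (Q : Polynomial ℤ), Q.degree < (n:ℕ) →
    ∑ i ∈ range (n+1), (-1:ℤ)^i * (n.choose i : ℤ) * Q.eval (i:ℤ) = 0 := by
  intro n
  induction n with
  | zero =>
    intro Q hQ
    have : Q = 0 := by
      rw [← Polynomial.degree_eq_bot]
      exact Nat.WithBot.lt_zero_iff.mp (by exact_mod_cast hQ)
    simp [this]
  | succ n ih =>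
    intro Q hQ
    have hstep := APalt_step n (fun i => Q.eval (i:ℤ))
    rw [show n+1+1 = n+2 from rfl, hstep]
    have hcomb : (∑ i ∈ range (n+1), (-1:ℤ)^i * (n.choose i : ℤ) * Q.eval (i:ℤ))
        - ∑ i ∈ range (n+1), (-1:ℤ)^i * (n.choose i : ℤ) * Q.eval ((i+1:ℕ):ℤ)
        = ∑ i ∈ range (n+1), (-1:ℤ)^i * (n.choose i : ℤ)
            * (Q - Q.comp (X + C 1)).eval (i:ℤ) := by
      rw [← Finset.sum_sub_distrib]
      refine Finset.sum_congr rfl fun i _ => ?_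
      have : Q.eval ((i+1:ℕ):ℤ) = (Q.comp (X + C 1)).eval (i:ℤ) := by
        rw [eval_comp]; push_cast; simp
      rw [this, eval_sub]; ring
    rw [hcomb]
    refine ih _ ?_
    -- degree (Q - Q.comp (X + C 1)) < n
    by_cases hQ0 : Q = 0
    · simp [hQ0]
    by_cases hdQ : Q.degree ≤ 0
    · obtain ⟨c, rfl⟩ : ∃ c, Q = C c := ⟨Q.coeff 0, Polynomial.eq_C_of_degree_le_zero hdQ⟩
      simp only [Polynomial.C_comp, sub_self, Polynomial.degree_zero]
      exact WithBot.bot_lt_coe n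
    · push_neg at hdQ
      have hnd1 : (X + C (1:ℤ)).natDegree = 1 := Polynomial.natDegree_X_add_C 1
      have hndc : (Q.comp (X + C 1)).natDegree = Q.natDegree := by
        rw [Polynomial.natDegree_comp, hnd1, mul_one]
      have hlc : (Q.comp (X + C 1)).leadingCoeff = Q.leadingCoeff := by
        rw [Polynomial.leadingCoeff_comp (by rw [hnd1]; norm_num)]
        have : (X + C (1:ℤ)).leadingCoeff = 1 := by
          have := Polynomial.monic_X_add_C (1:ℤ)
          exact this
        rw [this, one_pow, mul_one]
      have hc0 : Q.comp (X + C 1) ≠ 0 := by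
        intro h
        apply hQ0
        have := hlc.symm
        rw [h, Polynomial.leadingCoeff_zero] at this
        exact Polynomial.leadingCoeff_eq_zero.mp this.symm.symm
      have hdeg_eq : Q.degree = (Q.comp (X + C 1)).degree := by
        rw [Polynomial.degree_eq_natDegree hQ0, Polynomial.degree_eq_natDegree hc0, hndc]
      have hlt := Polynomial.degree_sub_lt hdeg_eq hQ0 hlc.symm
      have hQn : Q.degree ≤ (n:ℕ) := by
        rw [Polynomial.degree_eq_natDegree hQ0] at hQ ⊢
        exact_mod_cast Nat.lt_succ_iff.mp (by exact_mod_cast hQ)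
      exact lt_of_lt_of_le hlt hQn

lemma APFD1 (n : ℕ) (Q : Polynomial ℤ) (hdeg : Q.degree ≤ (n:ℕ)) :
    ∑ i ∈ range (n+1), (-1:ℤ)^i * (n.choose i : ℤ) * Q.eval (i:ℤ)
      = (-1:ℤ)^n * (n.factorial : ℤ) * Q.coeff n := by
  set c := Q.coeff n with hc
  set R := Q - C c * descPochhammer ℤ n with hR
  have hdpc_deg : (descPochhammer ℤ n).natDegree = n := descPochhammer_natDegree ℤ n
  have hdpc_monic : (descPochhammer ℤ n).Monic := monic_descPochhammer ℤ n
  have hdpc_degle : (descPochhammer ℤ n).degree ≤ (n:ℕ) := by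
    rw [Polynomial.degree_eq_natDegree hdpc_monic.ne_zero, hdpc_deg]
  have hRdeg : R.degree < (n:ℕ) := by
    refine Polynomial.degree_lt_iff_coeff_zero R n |>.mpr ?_
    intro m hm
    rw [hR, Polynomial.coeff_sub, Polynomial.coeff_C_mul]
    rcases eq_or_lt_of_le hm with h | h
    · have hcoef : (descPochhammer ℤ n).coeff m = 1 := by
        rw [← h]
        have := hdpc_monic.coeff_natDegree
        rwa [hdpc_deg] at this
      rw [hcoef, mul_one, ← h, ← hc, sub_self]
    · rw [Polynomial.coeff_eq_zero_of_degree_lt (lt_of_le_of_lt hdeg (by exact_mod_cast h)),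
        Polynomial.coeff_eq_zero_of_degree_lt (lt_of_le_of_lt hdpc_degle (by exact_mod_cast h)),
        mul_zero, sub_self]
  have hsplit : ∀ i : ℕ, Q.eval (i:ℤ)
      = R.eval (i:ℤ) + c * (descPochhammer ℤ n).eval (i:ℤ) := by
    intro i
    rw [hR]
    simp [eval_sub, eval_mul]
  calc ∑ i ∈ range (n+1), (-1:ℤ)^i * (n.choose i : ℤ) * Q.eval (i:ℤ)
      = (∑ i ∈ range (n+1), (-1:ℤ)^i * (n.choose i : ℤ) * R.eval (i:ℤ))
        + c * ∑ i ∈ range (n+1), (-1:ℤ)^i * (n.choose i : ℤ)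
            * (descPochhammer ℤ n).eval (i:ℤ) := by
        rw [Finset.mul_sum, ← Finset.sum_add_distrib]
        refine Finset.sum_congr rfl fun i _ => ?_
        rw [hsplit i]; ring
    _ = (-1:ℤ)^n * (n.factorial : ℤ) * c := by
        rw [APFD0 n R hRdeg, zero_add]
        have hev : ∀ i : ℕ, (descPochhammer ℤ n).eval (i:ℤ) = (i.descFactorial n : ℤ) := by
          intro i; exact_mod_cast descPochhammer_eval_eq_descFactorial ℤ i n
        rw [Finset.sum_range_succ]
        have hzero : ∑ i ∈ range n, (-1:ℤ)^i * (n.choose i : ℤ)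
            * (descPochhammer ℤ n).eval (i:ℤ) = 0 := by
          refine Finset.sum_eq_zero fun i hi => ?_
          simp only [mem_range] at hi
          rw [hev i, Nat.descFactorial_eq_zero_iff_lt.mpr hi, Nat.cast_zero, mul_zero]
        rw [hzero, zero_add, hev n, Nat.descFactorial_self, Nat.choose_self]
        ring


lemma APdF1nat (j i : ℕ) : ∏ l ∈ range j, (i+1+l) = (i+j).descFactorial j := by
  rw [Nat.descFactorial_eq_prod_range]
  calc ∏ l ∈ range j, (i+1+l) = ∏ l ∈ range j, (i+j-(j-1-l)) := by
        refine Finset.prod_congr rfl fun l hl => ?_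
        simp only [mem_range] at hl; omega
    _ = ∏ l ∈ range j, (i+j-l) := Finset.prod_range_reflect (fun l => i+j-l) j

lemma APdF2nat (j i : ℕ) (hi : i ≤ 2*j) :
    ∏ l ∈ range j, (2*j+1+l-i) = (3*j-i).descFactorial j := by
  rw [Nat.descFactorial_eq_prod_range]
  calc ∏ l ∈ range j, (2*j+1+l-i) = ∏ l ∈ range j, (3*j-i-(j-1-l)) := by
        refine Finset.prod_congr rfl fun l hl => ?_
        simp only [mem_range] at hl; omega
    _ = ∏ l ∈ range j, (3*j-i-l) := Finset.prod_range_reflect (fun l => 3*j-i-l) j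

lemma APdF1 (j i : ℕ) :
    ∏ l ∈ range j, ((i:ℤ) + l + 1) = ((i+j).descFactorial j : ℤ) := by
  rw [← APdF1nat j i, Nat.cast_prod]
  refine Finset.prod_congr rfl fun l _ => ?_
  push_cast; ring

lemma APdF2 (j i : ℕ) (hi : i ≤ 2*j) :
    ∏ l ∈ range j, ((i:ℤ) - (2*(j:ℤ) + 1 + l)) = (-1:ℤ)^j * ((3*j-i).descFactorial j : ℤ) := by
  have e1 : ∀ l ∈ range j, ((i:ℤ) - (2*(j:ℤ) + 1 + l)) = (-1) * ((2*j+1+l-i : ℕ) : ℤ) := by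
    intro l hl
    have hle : i ≤ 2*j+1+l := by omega
    rw [Nat.cast_sub hle]; push_cast; ring
  rw [Finset.prod_congr rfl e1, Finset.prod_mul_distrib, Finset.prod_const, card_range]
  rw [← Nat.cast_prod, APdF2nat j i hi]

lemma APtermconv (j i : ℕ) (hi : i ≤ 2*j) :
    (2*j).factorial * ((2*j).choose i * ((i+j).descFactorial j * (3*j-i).descFactorial j))
      = ((2*j).choose i)^2 * ((j+i).factorial * (3*j-i).factorial) := by
  have h1 : (2*j).choose i * i.factorial * (2*j-i).factorial = (2*j).factorial :=
    Nat.choose_mul_factorial_mul_factorial hi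
  have h2 : i.factorial * (i+j).descFactorial j = (i+j).factorial := by
    have := Nat.factorial_mul_descFactorial (show j ≤ i+j by omega)
    rwa [Nat.add_sub_cancel] at this
  have h3 : (2*j-i).factorial * (3*j-i).descFactorial j = (3*j-i).factorial := by
    have := Nat.factorial_mul_descFactorial (show j ≤ 3*j-i by omega)
    rwa [show 3*j-i-j = 2*j-i by omega] at this
  calc (2*j).factorial * ((2*j).choose i * ((i+j).descFactorial j * (3*j-i).descFactorial j))
      = ((2*j).choose i * i.factorial * (2*j-i).factorial)
          * ((2*j).choose i * ((i+j).descFactorial j * (3*j-i).descFactorial j)) := by rw [h1]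
    _ = ((2*j).choose i)^2 * ((i.factorial * (i+j).descFactorial j)
          * ((2*j-i).factorial * (3*j-i).descFactorial j)) := by ring
    _ = ((2*j).choose i)^2 * ((j+i).factorial * (3*j-i).factorial) := by
        rw [h2, h3, Nat.add_comm j i]

lemma APcrux (j : ℕ) :
    ∑ i ∈ range (2*j+1), (-1:ℤ)^(j+i) * (((2*j).choose i : ℤ))^2
        * ((j+i).factorial : ℤ) * ((3*j-i).factorial : ℤ)
      = (((2*j).factorial : ℤ))^2 := by
  set P : Polynomial ℤ := (∏ l ∈ range j, (X + C ((l:ℤ)+1)))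
      * (∏ l ∈ range j, (X - C (2*(j:ℤ)+1+l))) with hP
  have hm1 : (∏ l ∈ range j, (X + C ((l:ℤ)+1))).Monic :=
    Polynomial.monic_prod_of_monic _ _ fun l _ => Polynomial.monic_X_add_C _
  have hm2 : (∏ l ∈ range j, (X - C (2*(j:ℤ)+1+l))).Monic :=
    Polynomial.monic_prod_of_monic _ _ fun l _ => Polynomial.monic_X_sub_C _
  have hPm : P.Monic := hm1.mul hm2
  have hnd : P.natDegree = 2*j := by
    have d1 : (∏ l ∈ range j, (X + C ((l:ℤ)+1))).natDegree
        = ∑ l ∈ range j, (X + C ((l:ℤ)+1)).natDegree :=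
      Polynomial.natDegree_prod _ _ fun l _ => (Polynomial.monic_X_add_C ((l:ℤ)+1)).ne_zero
    have d2 : (∏ l ∈ range j, (X - C (2*(j:ℤ)+1+l))).natDegree
        = ∑ l ∈ range j, (X - C (2*(j:ℤ)+1+l)).natDegree :=
      Polynomial.natDegree_prod _ _ fun l _ => (Polynomial.monic_X_sub_C (2*(j:ℤ)+1+l)).ne_zero
    rw [hP, Polynomial.natDegree_mul hm1.ne_zero hm2.ne_zero, d1, d2]
    simp only [Polynomial.natDegree_X_add_C, Polynomial.natDegree_X_sub_C,
      Finset.sum_const, card_range, smul_eq_mul, mul_one]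
    omega
  have hdegle : P.degree ≤ ((2*j : ℕ) : WithBot ℕ) := by
    rw [Polynomial.degree_eq_natDegree hPm.ne_zero, hnd]
  have hcoeff : P.coeff (2*j) = 1 := by
    have := hPm.coeff_natDegree
    rwa [hnd] at this
  have heval : ∀ i ∈ range (2*j+1), P.eval (i:ℤ)
      = (-1:ℤ)^j * (((i+j).descFactorial j : ℤ) * ((3*j-i).descFactorial j : ℤ)) := by
    intro i hi
    simp only [mem_range] at hi
    have hi' : i ≤ 2*j := by omega
    rw [hP, Polynomial.eval_mul, Polynomial.eval_prod, Polynomial.eval_prod]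
    have e1 : ∀ l ∈ range j, ((X + C ((l:ℤ)+1)).eval (i:ℤ)) = ((i:ℤ) + l + 1) := by
      intro l _; simp; ring
    have e2 : ∀ l ∈ range j, ((X - C (2*(j:ℤ)+1+l)).eval (i:ℤ)) = ((i:ℤ) - (2*(j:ℤ)+1+l)) := by
      intro l _; simp
    rw [Finset.prod_congr rfl e1, Finset.prod_congr rfl e2, APdF1, APdF2 j i hi']
    ring
  have hFD := APFD1 (2*j) P hdegle
  rw [hcoeff, mul_one, Finset.sum_congr rfl (fun i hi => by rw [heval i hi])] at hFD
  have hconv : ∀ i ∈ range (2*j+1),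
      (-1:ℤ)^(j+i) * (((2*j).choose i : ℤ))^2 * ((j+i).factorial : ℤ) * ((3*j-i).factorial : ℤ)
      = ((2*j).factorial : ℤ) * ((-1:ℤ)^i * ((2*j).choose i : ℤ) * ((-1:ℤ)^j
            * (((i+j).descFactorial j : ℤ) * ((3*j-i).descFactorial j : ℤ)))) := by
    intro i hi
    simp only [mem_range] at hi
    have hi' : i ≤ 2*j := by omega
    have hcz : ((2*j).factorial : ℤ) * (((2*j).choose i : ℤ)
        * (((i+j).descFactorial j : ℤ) * ((3*j-i).descFactorial j : ℤ)))
        = (((2*j).choose i : ℤ))^2 * (((j+i).factorial : ℤ) * ((3*j-i).factorial : ℤ)) := by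
      exact_mod_cast congrArg (Nat.cast : ℕ → ℤ) (APtermconv j i hi')
    calc (-1:ℤ)^(j+i) * (((2*j).choose i : ℤ))^2 * ((j+i).factorial : ℤ)
            * ((3*j-i).factorial : ℤ)
        = (-1:ℤ)^j * (-1:ℤ)^i * ((((2*j).choose i : ℤ))^2
            * (((j+i).factorial : ℤ) * ((3*j-i).factorial : ℤ))) := by
          rw [pow_add]; ring
      _ = (-1:ℤ)^j * (-1:ℤ)^i * (((2*j).factorial : ℤ) * (((2*j).choose i : ℤ)
            * (((i+j).descFactorial j : ℤ) * ((3*j-i).descFactorial j : ℤ)))) := by rw [hcz]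
      _ = _ := by ring
  rw [Finset.sum_congr rfl hconv, ← Finset.mul_sum, hFD]
  have h2j : (-1:ℤ)^(2*j) = 1 := by simp [pow_mul, neg_one_sq]
  rw [h2j, one_mul, pow_two]


noncomputable def APF (j : ℕ) : Polynomial ℤ :=
  (∑ i ∈ range (2*j+1), C (((2*j).choose i : ℤ)^2)
      * (descPochhammer ℤ (4*j+1)).comp (X + C ((j:ℤ)+i)))
    - (descPochhammer ℤ (4*j+1)).comp (X + C (2*(j:ℤ)))

lemma APdPC_eval_nat (q m : ℕ) :
    (descPochhammer ℤ q).eval ((m:ℕ):ℤ) = (q.factorial : ℤ) * ((m.choose q : ℕ) : ℤ) := by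
  rw [descPochhammer_eval_eq_descFactorial, Nat.descFactorial_eq_factorial_mul_choose]
  push_cast; ring

lemma APF_eval' (j n : ℕ) :
    (APF j).eval (n:ℤ)
      = (∑ i ∈ range (2*j+1), (((2*j).choose i : ℤ))^2
          * (((4*j+1).factorial : ℤ) * (((n+j+i).choose (4*j+1) : ℕ) : ℤ)))
        - ((4*j+1).factorial : ℤ) * (((n+2*j).choose (4*j+1) : ℕ) : ℤ) := by
  rw [APF, Polynomial.eval_sub, Polynomial.eval_finset_sum]
  congr 1
  · refine Finset.sum_congr rfl fun i _ => ?_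
    rw [Polynomial.eval_mul, Polynomial.eval_C, Polynomial.eval_comp]
    have harg : (X + C ((j:ℤ)+i)).eval (n:ℤ) = ((n+j+i : ℕ) : ℤ) := by
      simp only [Polynomial.eval_add, Polynomial.eval_X, Polynomial.eval_C]
      push_cast; ring
    rw [harg, APdPC_eval_nat]
  · rw [Polynomial.eval_comp]
    have harg : (X + C (2*(j:ℤ))).eval (n:ℤ) = ((n+2*j : ℕ) : ℤ) := by
      simp only [Polynomial.eval_add, Polynomial.eval_X, Polynomial.eval_C]
      push_cast; ring
    rw [harg, APdPC_eval_nat]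

lemma APF_eval (j n : ℕ) :
    (APF j).eval (n:ℤ) = ((4*j+1).factorial : ℤ) *
      ((∑ k ∈ range n, (((k+j).choose (2*j) : ℕ) : ℤ)^2)
        - (((n+2*j).choose (4*j+1) : ℕ) : ℤ)) := by
  rw [APF_eval']
  have hs : ∑ i ∈ range (2*j+1), (((2*j).choose i : ℤ))^2
          * (((4*j+1).factorial : ℤ) * (((n+j+i).choose (4*j+1) : ℕ) : ℤ))
      = ((4*j+1).factorial : ℤ)
          * ∑ i ∈ range (2*j+1), (((2*j).choose i : ℤ))^2 * (((n+j+i).choose (4*j+1) : ℕ) : ℤ) := by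
    rw [Finset.mul_sum]
    exact Finset.sum_congr rfl fun i _ => by ring
  rw [hs]
  have hAP : ∑ i ∈ range (2*j+1), (((2*j).choose i : ℤ))^2 * (((n+j+i).choose (4*j+1) : ℕ) : ℤ)
      = ∑ k ∈ range n, (((k+j).choose (2*j) : ℕ) : ℤ)^2 := by
    have := APsum j n
    have hcast := congrArg (Nat.cast : ℕ → ℤ) this
    push_cast at hcast ⊢
    linarith [hcast]
  rw [hAP]
  ring

lemma APF_eval_neg (j n : ℕ) (hn : 3*j ≤ n) :
    (APF j).eval (-(n:ℤ)) = - (APF j).eval (n:ℤ) := by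
  have key : ∀ a : ℕ, a ≤ 3*j → (descPochhammer ℤ (4*j+1)).eval (-(n:ℤ) + a)
      = -(((4*j+1).factorial : ℤ) * ((((n-a)+4*j).choose (4*j+1) : ℕ) : ℤ)) := by
    intro a ha
    have han : a ≤ n := le_trans ha hn
    have h1 : (-(n:ℤ) + a) = -(((n-a : ℕ) : ℤ)) := by
      rw [Nat.cast_sub han]; ring
    rw [h1, descPochhammer_eval_eq_ascPochhammer]
    have h2 : (-(((n-a:ℕ)):ℤ) - (4*j+1 : ℕ) + 1) = -(((n-a+4*j : ℕ)):ℤ) := by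
      push_cast; ring
    rw [h2, ascPochhammer_eval_neg_eq_descPochhammer,
      descPochhammer_eval_eq_descFactorial, Nat.descFactorial_eq_factorial_mul_choose]
    have h3 : (-1:ℤ)^(4*j+1) = -1 := Odd.neg_one_pow ⟨2*j, by omega⟩
    rw [h3]
    push_cast; ring
  conv_lhs => rw [APF, Polynomial.eval_sub, Polynomial.eval_finset_sum]
  have hterm : ∀ i ∈ range (2*j+1),
      (C (((2*j).choose i : ℤ)^2) * (descPochhammer ℤ (4*j+1)).comp (X + C ((j:ℤ)+i))).eval
        (-(n:ℤ))
      = (((2*j).choose i : ℤ))^2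
          * (-(((4*j+1).factorial : ℤ) * ((((n-(j+i))+4*j).choose (4*j+1) : ℕ) : ℤ))) := by
    intro i hi
    simp only [mem_range] at hi
    rw [Polynomial.eval_mul, Polynomial.eval_C, Polynomial.eval_comp]
    have harg : (X + C ((j:ℤ)+i)).eval (-(n:ℤ)) = -(n:ℤ) + ((j+i : ℕ) : ℤ) := by
      simp only [Polynomial.eval_add, Polynomial.eval_X, Polynomial.eval_C]
      push_cast; ring
    rw [harg, key (j+i) (by omega)]
  have hB : ((descPochhammer ℤ (4*j+1)).comp (X + C (2*(j:ℤ)))).eval (-(n:ℤ))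
      = -(((4*j+1).factorial : ℤ) * ((((n-2*j)+4*j).choose (4*j+1) : ℕ) : ℤ)) := by
    rw [Polynomial.eval_comp]
    have harg : (X + C (2*(j:ℤ))).eval (-(n:ℤ)) = -(n:ℤ) + ((2*j : ℕ) : ℤ) := by
      simp only [Polynomial.eval_add, Polynomial.eval_X, Polynomial.eval_C]
      push_cast; ring
    rw [harg, key (2*j) (by omega)]
  rw [Finset.sum_congr rfl hterm, hB]
  have hre : ∑ i ∈ range (2*j+1), (((2*j).choose i : ℤ))^2
        * (-(((4*j+1).factorial : ℤ) * ((((n-(j+i))+4*j).choose (4*j+1) : ℕ) : ℤ)))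
      = ∑ i ∈ range (2*j+1), (((2*j).choose i : ℤ))^2
        * (-(((4*j+1).factorial : ℤ) * (((n+j+i).choose (4*j+1) : ℕ) : ℤ))) := by
    rw [← Finset.sum_range_reflect]
    refine Finset.sum_congr rfl fun i hi => ?_
    simp only [mem_range] at hi
    have e1 : 2*j+1-1-i = 2*j-i := by omega
    have e2 : (2*j).choose (2*j-i) = (2*j).choose i := Nat.choose_symm (by omega)
    have e3 : (n-(j+(2*j-i)))+4*j = n+j+i := by omega
    rw [e1, e2, e3]
  rw [hre, show (n-2*j)+4*j = n+2*j by omega, APF_eval']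
  have hsn : ∑ i ∈ range (2*j+1), (((2*j).choose i : ℤ))^2
        * (-(((4*j+1).factorial : ℤ) * (((n+j+i).choose (4*j+1) : ℕ) : ℤ)))
      = -∑ i ∈ range (2*j+1), (((2*j).choose i : ℤ))^2
        * ((((4*j+1).factorial : ℤ) * (((n+j+i).choose (4*j+1) : ℕ) : ℤ))) := by
    rw [← Finset.sum_neg_distrib]
    exact Finset.sum_congr rfl fun i _ => by ring
  rw [hsn]
  ring


lemma APcoeff_comp_neg (f : Polynomial ℤ) (k : ℕ) :
    (f.comp (-X)).coeff k = (-1:ℤ)^k * f.coeff k := by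
  induction f using Polynomial.induction_on' with
  | add p q hp hq =>
    rw [Polynomial.add_comp, Polynomial.coeff_add, hp, hq, Polynomial.coeff_add]
    ring
  | monomial n a =>
    rw [Polynomial.monomial_comp]
    by_cases h : n = k
    · subst h
      rw [show (-X : Polynomial ℤ) = C (-1) * X by simp, mul_pow, ← Polynomial.C_pow,
        ← mul_assoc, ← Polynomial.C_mul]
      rw [Polynomial.coeff_C_mul, Polynomial.coeff_monomial, Polynomial.coeff_X_pow]
      simp [mul_comm]
    · rw [show (-X : Polynomial ℤ) = C (-1) * X by simp, mul_pow, ← Polynomial.C_pow,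
        ← mul_assoc, ← Polynomial.C_mul]
      rw [Polynomial.coeff_C_mul, Polynomial.coeff_monomial, Polynomial.coeff_X_pow]
      simp [h]
      intro h'
      exact absurd h'.symm h

lemma APodd (j : ℕ) : (APF j).comp (-X) = -(APF j) := by
  apply Polynomial.eq_of_infinite_eval_eq
  apply Set.Infinite.mono (s := (fun n : ℕ => (n:ℤ)) '' (Set.Ici (3*j)))
  · rintro x ⟨n, hn, rfl⟩
    simp only [Set.mem_setOf_eq]
    rw [Polynomial.eval_comp, Polynomial.eval_neg, Polynomial.eval_neg, Polynomial.eval_X]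
    exact APF_eval_neg j n hn
  · exact Set.Infinite.image (Set.injOn_of_injective (fun a b => by exact_mod_cast id))
      (Set.Ici_infinite _)

lemma APcoeff_even (j k : ℕ) (hk : Even k) : (APF j).coeff k = 0 := by
  have h1 := APcoeff_comp_neg (APF j) k
  rw [APodd j, Polynomial.coeff_neg, hk.neg_one_pow, one_mul] at h1
  linarith

lemma APcoeff1_comp (P : Polynomial ℤ) (a : ℤ) :
    (P.comp (X + C a)).coeff 1 = P.derivative.eval a := by
  have h1 : (P.comp (X + C a)).coeff 1 = ((P.comp (X + C a)).derivative).coeff 0 := by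
    rw [Polynomial.coeff_derivative]
    push_cast; ring
  rw [h1, Polynomial.derivative_comp]
  have h2 : Polynomial.derivative (X + C a) = 1 := by
    rw [Polynomial.derivative_add, Polynomial.derivative_X, Polynomial.derivative_C, add_zero]
  rw [h2, one_mul, Polynomial.coeff_zero_eq_eval_zero, Polynomial.eval_comp]
  simp

lemma APdPCderiv (j : ℕ) : ∀ t : ℕ, (Polynomial.derivative (descPochhammer ℤ (j+1+t))).eval (j:ℤ)
    = (-1:ℤ)^t * (j.factorial : ℤ) * (t.factorial : ℤ)
  | 0 => by
    rw [show j+1+0 = j+1 from rfl, descPochhammer_succ_right, Polynomial.derivative_mul]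
    rw [Polynomial.eval_add, Polynomial.eval_mul, Polynomial.eval_mul]
    have h1 : ((X : Polynomial ℤ) - (j:ℤ[X])).eval (j:ℤ) = 0 := by
      simp
    have h2 : (Polynomial.derivative ((X : Polynomial ℤ) - (j:ℤ[X]))).eval (j:ℤ) = 1 := by
      rw [Polynomial.derivative_sub, Polynomial.derivative_X]
      simp
    rw [h1, h2, mul_zero, mul_one, zero_add, descPochhammer_eval_eq_descFactorial,
      Nat.descFactorial_self]
    simp
  | (t+1) => by
    rw [show j+1+(t+1) = (j+1+t)+1 from rfl, descPochhammer_succ_right, Polynomial.derivative_mul]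
    rw [Polynomial.eval_add, Polynomial.eval_mul, Polynomial.eval_mul]
    have h1 : ((X : Polynomial ℤ) - ((j+1+t : ℕ):ℤ[X])).eval (j:ℤ) = -(t+1 : ℤ) := by
      simp only [Polynomial.eval_sub, Polynomial.eval_X, Polynomial.eval_natCast]
      push_cast; ring
    have h2 : (Polynomial.derivative ((X : Polynomial ℤ) - ((j+1+t:ℕ):ℤ[X]))).eval (j:ℤ) = 1 := by
      rw [Polynomial.derivative_sub, Polynomial.derivative_X]
      simp
    have h3 : (descPochhammer ℤ (j+1+t)).eval (j:ℤ) = 0 := by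
      rw [descPochhammer_eval_eq_descFactorial]
      rw [Nat.descFactorial_eq_zero_iff_lt.mpr (by omega)]
      simp
    rw [h1, h2, h3, APdPCderiv j t, mul_one, Nat.factorial_succ]
    push_cast; ring


lemma APF_coeff1 (j : ℕ) : (APF j).coeff 1 = 0 := by
  rw [APF, Polynomial.coeff_sub, Polynomial.finset_sum_coeff]
  have hterm : ∀ i ∈ range (2*j+1),
      (C (((2*j).choose i : ℤ)^2) * (descPochhammer ℤ (4*j+1)).comp (X + C ((j:ℤ)+i))).coeff 1
      = (-1:ℤ)^(j+i) * (((2*j).choose i : ℤ))^2 * ((j+i).factorial : ℤ)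
          * ((3*j-i).factorial : ℤ) := by
    intro i hi
    simp only [mem_range] at hi
    have hi' : i ≤ 2*j := by omega
    rw [Polynomial.coeff_C_mul, APcoeff1_comp]
    have hd := APdPCderiv (j+i) (3*j-i)
    rw [show (j+i)+1+(3*j-i) = 4*j+1 by omega] at hd
    have hpt : (((j+i:ℕ)):ℤ) = (j:ℤ)+i := by push_cast; ring
    rw [hpt] at hd
    rw [hd]
    have hsign : (-1:ℤ)^(3*j-i) = (-1:ℤ)^(j+i) := by
      have sq : (-1:ℤ)^(j+i) * (-1:ℤ)^(j+i) = 1 := by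
        rw [← pow_add]
        exact Even.neg_one_pow ⟨j+i, by ring⟩
      calc (-1:ℤ)^(3*j-i) = (-1:ℤ)^(3*j-i) * ((-1:ℤ)^(j+i) * (-1:ℤ)^(j+i)) := by
            rw [sq, mul_one]
        _ = (-1:ℤ)^((3*j-i)+(j+i)) * (-1:ℤ)^(j+i) := by rw [pow_add]; ring
        _ = (-1:ℤ)^(j+i) := by
            rw [show (3*j-i)+(j+i) = 4*j by omega,
              Even.neg_one_pow (⟨2*j, by ring⟩ : Even (4*j)), one_mul]
    rw [hsign]
    ring
  rw [Finset.sum_congr rfl hterm, APcrux]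
  have hB : ((descPochhammer ℤ (4*j+1)).comp (X + C (2*(j:ℤ)))).coeff 1
      = (((2*j).factorial : ℤ))^2 := by
    rw [APcoeff1_comp]
    have hd := APdPCderiv (2*j) (2*j)
    rw [show (2*j)+1+(2*j) = 4*j+1 by omega] at hd
    have hpt : (((2*j:ℕ)):ℤ) = 2*(j:ℤ) := by push_cast; ring
    rw [hpt] at hd
    rw [hd, Even.neg_one_pow (⟨j, by ring⟩ : Even (2*j)), one_mul, pow_two]
  rw [hB, sub_self]

lemma APX3 (j : ℕ) : (X:Polynomial ℤ)^3 ∣ APF j := by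
  rw [Polynomial.X_pow_dvd_iff]
  intro d hd
  interval_cases d
  · exact APcoeff_even j 0 (by norm_num)
  · exact APF_coeff1 j
  · exact APcoeff_even j 2 (by norm_num)

lemma APkey (p j : ℕ) (hp : p.Prime) (hp3 : 3 < p) (hj : 2*j < p) :
    ((p:ℤ))^2 ∣ (∑ k ∈ range p, (((k+j).choose (2*j) : ℕ) : ℤ)^2)
      - (((p+2*j).choose (4*j+1) : ℕ) : ℤ) := by
  set D : ℤ := (∑ k ∈ range p, (((k+j).choose (2*j) : ℕ) : ℤ)^2)
      - (((p+2*j).choose (4*j+1) : ℕ) : ℤ) with hD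
  obtain ⟨G, hG⟩ := APX3 j
  have heval : ((4*j+1).factorial : ℤ) * D = (p:ℤ)^3 * G.eval (p:ℤ) := by
    rw [hD, ← APF_eval j p, hG, Polynomial.eval_mul, Polynomial.eval_pow, Polynomial.eval_X]
  have hfact_ne : (4*j+1).factorial ≠ 0 := Nat.factorial_ne_zero _
  set v := ((4*j+1).factorial).factorization p with hv
  set m := (4*j+1).factorial / p^v with hm
  have hdecomp : (4*j+1).factorial = p^v * m := (Nat.ordProj_mul_ordCompl_eq_self _ p).symm
  have hpm : ¬ p ∣ m := Nat.not_dvd_ordCompl hp hfact_ne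
  have hv1 : v ≤ 1 := by
    by_contra h
    push_neg at h
    have h2 : p^2 ∣ (4*j+1).factorial :=
      dvd_trans (pow_dvd_pow p h) (Nat.ordProj_dvd _ _)
    have hlog : Nat.log p (4*j+1) < 2 :=
      Nat.log_lt_of_lt_pow (by omega) (by nlinarith)
    rw [Nat.Prime.pow_dvd_factorial_iff hp hlog] at h2
    have hIco : ∑ i ∈ Finset.Ico 1 2, (4*j+1)/p^i = (4*j+1)/p := by
      have : Finset.Ico 1 2 = {1} := rfl
      rw [this, Finset.sum_singleton, pow_one]
    rw [hIco] at h2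
    have : (4*j+1)/p < 2 := Nat.div_lt_of_lt_mul (by omega)
    omega
  have h3 : (p:ℤ)^3 ∣ (p:ℤ)^v * ((m:ℤ) * D) := by
    have : ((4*j+1).factorial : ℤ) * D = (p:ℤ)^v * ((m:ℤ) * D) := by
      rw [hdecomp]; push_cast; ring
    rw [← this, heval]
    exact Dvd.intro _ rfl
  have h4 : (p:ℤ)^(3-v) ∣ (m:ℤ) * D := by
    have hsplit : (p:ℤ)^3 = (p:ℤ)^v * (p:ℤ)^(3-v) := by
      rw [← pow_add]; congr 1; omega
    rw [hsplit] at h3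
    exact (mul_dvd_mul_iff_left (a := (p:ℤ)^v)
      (pow_ne_zero _ (by exact_mod_cast hp.ne_zero))).mp h3
  have h5 : (p:ℤ)^2 ∣ (m:ℤ) * D :=
    dvd_trans (pow_dvd_pow _ (by omega : 2 ≤ 3-v)) h4
  have hcop : IsCoprime ((p:ℤ)) ((m:ℤ)) := by
    rw [Int.isCoprime_iff_gcd_eq_one, Int.gcd_natCast_natCast]
    exact hp.coprime_iff_not_dvd.mpr hpm
  exact (hcop.pow_left).dvd_of_dvd_mul_left h5


theorem apery_sum_mod_p_squared (p : ℕ) (hp : p.Prime) (hp3 : 3 < p) (x : ℤ) :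
    ∑ k ∈ range p,
        (∑ j ∈ range (k + 1),
          (k.choose j : ℤ) ^ 2 * ((k + j).choose j : ℤ) ^ 2 * x ^ j) ≡
      ∑ k ∈ range ((p - 1) / 2 + 1),
        ((p + 2 * k).choose (4 * k + 1) : ℤ) * ((2 * k).choose k : ℤ) ^ 2 * x ^ k
      [ZMOD (p : ℤ) ^ 2] := by
  have hppos : 0 < p := hp.pos
  have hpodd : p % 2 = 1 := Nat.odd_iff.mp (hp.odd_of_ne_two (by omega))
  -- Step 1: rewrite LHS
  have hLHS : ∑ k ∈ range p, (∑ j ∈ range (k + 1),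
        (k.choose j : ℤ) ^ 2 * ((k + j).choose j : ℤ) ^ 2 * x ^ j)
      = ∑ i ∈ range p, ((2*i).choose i : ℤ)^2 * x^i
          * (∑ k ∈ range p, (((k+i).choose (2*i) : ℕ) : ℤ)^2) := by
    have hsw : ∀ k ∈ range p, ∑ j ∈ range (k + 1),
          (k.choose j : ℤ) ^ 2 * ((k + j).choose j : ℤ) ^ 2 * x ^ j
        = ∑ j ∈ range p, ((k+j).choose (2*j) : ℤ)^2 * ((2*j).choose j : ℤ)^2 * x^j := by
      intro k hk
      simp only [mem_range] at hk
      have h1 : ∀ j ∈ range (k+1), (k.choose j : ℤ)^2 * ((k+j).choose j : ℤ)^2 * x^j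
          = ((k+j).choose (2*j) : ℤ)^2 * ((2*j).choose j : ℤ)^2 * x^j := by
        intro j hj
        simp only [mem_range] at hj
        have hnn : (k+j).choose (2*j) * (2*j).choose j = k.choose j * (k+j).choose j := by
          have h := Nat.choose_mul (n := k+j) (show j ≤ 2*j by omega)
          rw [Nat.add_sub_cancel, show 2*j-j = j by omega] at h
          rw [h, Nat.mul_comm]
        have hz : ((k+j).choose (2*j) : ℤ) * ((2*j).choose j : ℤ)
            = (k.choose j : ℤ) * ((k+j).choose j : ℤ) := by exact_mod_cast hnn
        have hsq : ((k+j).choose (2*j) : ℤ)^2 * ((2*j).choose j : ℤ)^2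
            = (k.choose j : ℤ)^2 * ((k+j).choose j : ℤ)^2 := by
          rw [← mul_pow, ← mul_pow, hz]
        rw [hsq]
      rw [Finset.sum_congr rfl h1]
      apply Finset.sum_subset (Finset.range_subset_range.mpr (by omega : k+1 ≤ p))
      intro j hj hnj
      simp only [mem_range] at hj hnj
      rw [Nat.choose_eq_zero_of_lt (show k+j < 2*j by omega)]
      push_cast
      ring
    rw [Finset.sum_congr rfl hsw, Finset.sum_comm]
    refine Finset.sum_congr rfl fun i _ => ?_
    rw [Finset.mul_sum]
    refine Finset.sum_congr rfl fun k _ => by push_cast; ring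
  rw [hLHS, Int.modEq_iff_dvd]
  -- now goal : p^2 ∣ (LHS') - RHS ... direction check below
  set T : ℕ → ℤ := fun i => ((p + 2 * i).choose (4 * i + 1) : ℤ) * ((2 * i).choose i : ℤ) ^ 2 * x ^ i
    with hT
  have hq1 : (p-1)/2 + 1 ≤ p := by omega
  have hsplit : ∑ i ∈ range p, T i
      = (∑ i ∈ range ((p-1)/2+1), T i) + ∑ i ∈ Ico ((p-1)/2+1) p, T i := by
    rw [Finset.range_eq_Ico, ← Finset.sum_Ico_consecutive _ (Nat.zero_le _) hq1, ← Finset.range_eq_Ico]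

  have hdvd_tail : ((p:ℤ))^2 ∣ ∑ i ∈ Ico ((p-1)/2+1) p, T i := by
    refine Finset.dvd_sum fun i hi => ?_
    simp only [mem_Ico] at hi
    have hdchoose : p ∣ (2*i).choose i := by
      have := Nat.Prime.dvd_choose_add hp (show i < p by omega) (show i < p by omega)
        (show p ≤ i + i by omega)
      rwa [show i+i = 2*i by omega] at this
    have hzdvd : (p:ℤ) ∣ ((2*i).choose i : ℤ) := Int.natCast_dvd_natCast.mpr hdchoose
    have h2 : (p:ℤ)^2 ∣ ((2*i).choose i : ℤ)^2 := pow_dvd_pow_of_dvd hzdvd 2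
    rw [hT]
    exact Dvd.dvd.mul_right (Dvd.dvd.mul_left h2 _) _
  have hdvd_main : ((p:ℤ))^2 ∣ (∑ i ∈ range p, T i)
      - ∑ i ∈ range p, ((2*i).choose i : ℤ)^2 * x^i
          * (∑ k ∈ range p, (((k+i).choose (2*i) : ℕ) : ℤ)^2) := by
    rw [← Finset.sum_sub_distrib]
    refine Finset.dvd_sum fun i hi => ?_
    simp only [mem_range] at hi
    rcases lt_or_ge (2*i) p with hcase | hcase
    · have hk := APkey p i hp hp3 hcase
      have harr : T i - ((2*i).choose i : ℤ)^2 * x^i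
            * (∑ k ∈ range p, (((k+i).choose (2*i) : ℕ) : ℤ)^2)
          = (((2*i).choose i : ℤ)^2 * x^i)
            * (-((∑ k ∈ range p, (((k+i).choose (2*i) : ℕ) : ℤ)^2)
                - ((p+2*i).choose (4*i+1) : ℤ))) := by
        rw [hT]; ring
      rw [harr]
      exact Dvd.dvd.mul_left ((dvd_neg).mpr hk) _
    · have hdchoose : p ∣ (2*i).choose i := by
        have := Nat.Prime.dvd_choose_add hp (show i < p by omega) (show i < p by omega)
          (show p ≤ i + i by omega)
        rwa [show i+i = 2*i by omega] at this
      have hzdvd : (p:ℤ) ∣ ((2*i).choose i : ℤ) := Int.natCast_dvd_natCast.mpr hdchoose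
      have h2 : (p:ℤ)^2 ∣ ((2*i).choose i : ℤ)^2 := pow_dvd_pow_of_dvd hzdvd 2
      have harr : T i - ((2*i).choose i : ℤ)^2 * x^i
            * (∑ k ∈ range p, (((k+i).choose (2*i) : ℕ) : ℤ)^2)
          = ((2*i).choose i : ℤ)^2
            * (((p+2*i).choose (4*i+1) : ℤ) * x^i
                - x^i * (∑ k ∈ range p, (((k+i).choose (2*i) : ℕ) : ℤ)^2)) := by
        rw [hT]; ring
      rw [harr]
      exact Dvd.dvd.mul_right h2 _
  -- combine
  have hfinal : ((p:ℤ))^2 ∣ (∑ i ∈ range ((p-1)/2+1), T i)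
      - ∑ i ∈ range p, ((2*i).choose i : ℤ)^2 * x^i
          * (∑ k ∈ range p, (((k+i).choose (2*i) : ℕ) : ℤ)^2) := by
    have heq : (∑ i ∈ range ((p-1)/2+1), T i)
        - ∑ i ∈ range p, ((2*i).choose i : ℤ)^2 * x^i
            * (∑ k ∈ range p, (((k+i).choose (2*i) : ℕ) : ℤ)^2)
        = ((∑ i ∈ range p, T i)
            - ∑ i ∈ range p, ((2*i).choose i : ℤ)^2 * x^i
              * (∑ k ∈ range p, (((k+i).choose (2*i) : ℕ) : ℤ)^2))
          - ∑ i ∈ Ico ((p-1)/2+1) p, T i := by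
      rw [hsplit]; ring
    rw [heq]
    exact dvd_sub hdvd_main hdvd_tail
  exact hfinal
end
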